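/- arXiv:2110.07764 — 5 statements merged into one kernel-verified Lean document; each statement's English description precedes it below -/
import Mathlib

section
/- Let G be a non-planar multigraph and let G' be obtained from G by a Δ-YY transformation. Then G' is non-planar. -/
open scoped Classical

noncomputable section

/-- A multigraph: a finite vertex type together with a symmetric multiplicity
function recording the size of the connection (set of parallel edges) between
any two vertices; there are no loops. -/
structure MG : Type 1 where
  V : Type
  fin : Fintype V
  mult : V → V → ℕ
  symm : ∀ u v, mult u v = mult v u
  loopless : ∀ v, mult v v = 0

namespace MG

/-- Two vertices are adjacent when their connection is non-empty. -/
def Adj (G : MG) (u v : G.V) : Prop := 0 < G.mult u v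

/-- Connection size as a function on unordered pairs of vertices. -/
def multS (G : MG) : Sym2 G.V → ℕ := Sym2.lift ⟨G.mult, G.symm⟩

/-- Number of vertices. -/
def order (G : MG) : ℕ := @Fintype.card G.V G.fin

/-- Degree of a vertex, counting edges with multiplicity. -/
def deg (G : MG) (v : G.V) : ℕ :=
  haveI := G.fin
  ∑ u, G.mult v u

/-- `G` is `k`-regular. -/
def Regular (G : MG) (k : ℕ) : Prop := ∀ v, G.deg v = k

/-- A simple graph: every connection has size at most 1. -/
def Simple (G : MG) : Prop := ∀ u v, G.mult u v ≤ 1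

/-- Isomorphism of multigraphs. -/
def Iso (G H : MG) : Prop :=
  ∃ e : G.V ≃ H.V, ∀ u v, H.mult (e u) (e v) = G.mult u v

/-- Indicator: is `{a,b}` one of the three pairs `{u,v}, {u,w}, {v,w}`? -/
def triCount {V : Type} (u v w a b : V) : ℕ :=
  if s(a, b) ∈ ({s(u, v), s(u, w), s(v, w)} : Set (Sym2 V)) then 1 else 0

lemma triCount_symm {V : Type} (u v w a b : V) :
    triCount u v w a b = triCount u v w b a := by
  unfold triCount
  have h : s(a, b) = s(b, a) := Sym2.eq_swap
  rw [h]

/-- `u, v, w` form a delta (triangle): pairwise distinct and pairwise adjacent. -/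
def IsDelta (G : MG) (u v w : G.V) : Prop :=
  u ≠ v ∧ u ≠ w ∧ v ≠ w ∧ G.Adj u v ∧ G.Adj u w ∧ G.Adj v w

/-- `x` is the centre of a wye with external vertices `u, v, w`: the edges
incident to `x` are exactly two parallel edges to each of `u, v, w`. -/
def IsWye (G : MG) (x u v w : G.V) : Prop :=
  u ≠ v ∧ u ≠ w ∧ v ≠ w ∧ x ≠ u ∧ x ≠ v ∧ x ≠ w ∧
    G.mult x u = 2 ∧ G.mult x v = 2 ∧ G.mult x w = 2 ∧
    ∀ y : G.V, y ≠ u → y ≠ v → y ≠ w → G.mult x y = 0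

/-- Multiplicity function of the result of a Δ-YY transformation on the
delta `u, v, w`; the new vertex `x` is `none`. -/
def deltaMult (G : MG) (u v w : G.V) : Option G.V → Option G.V → ℕ
  | none, none => 0
  | none, some b => if b = u ∨ b = v ∨ b = w then 2 else 0
  | some a, none => if a = u ∨ a = v ∨ a = w then 2 else 0
  | some a, some b => G.mult a b - triCount u v w a b

/-- The result of the Δ-YY transformation on the delta `u, v, w`: one edge of
each of the connections `uv`, `uw`, `vw` is removed, a new vertex (`none`) is
added, joined by two parallel edges to each of `u, v, w`. -/
def deltaYY (G : MG) (u v w : G.V) : MG where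
  V := Option G.V
  fin := by haveI := G.fin; infer_instance
  mult := G.deltaMult u v w
  symm := by
    rintro (_ | a) (_ | b)
    · rfl
    · rfl
    · rfl
    · show G.mult a b - triCount u v w a b = G.mult b a - triCount u v w b a
      rw [G.symm a b, triCount_symm]
  loopless := by
    rintro (_ | a)
    · rfl
    · show G.mult a a - triCount u v w a a = 0
      rw [G.loopless]
      exact Nat.zero_sub _

/-- The result of the YY-Δ transformation on a wye with centre `x` and external
vertices `u, v, w`: the vertex `x` is deleted together with all its incident
edges, and one new edge is added to each of the connections `uv`, `uw`, `vw`. -/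
def yyDelta (G : MG) (x u v w : G.V) : MG where
  V := {y : G.V // y ≠ x}
  fin := by haveI := G.fin; infer_instance
  mult a b := if a = b then 0 else G.mult a.1 b.1 + triCount u v w a.1 b.1
  symm := by
    intro a b
    try dsimp only
    rcases eq_or_ne a b with h | h
    · subst h; rfl
    · rw [if_neg h, if_neg h.symm, G.symm a.1 b.1, triCount_symm]
  loopless := fun a => if_pos rfl

/-- `G'` is obtained from `G` by a Δ-YY transformation. -/
def DeltaYYStep (G G' : MG) : Prop :=
  ∃ u v w : G.V, G.IsDelta u v w ∧ Iso (G.deltaYY u v w) G'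

/-- `G'` is obtained from `G` by a YY-Δ transformation. -/
def YYDeltaStep (G G' : MG) : Prop :=
  ∃ x u v w : G.V, G.IsWye x u v w ∧ Iso (G.yyDelta x u v w) G'

/-- `G'` is obtained from `G` by a Δ-YY operation (either a Δ-YY transformation
or a YY-Δ transformation). -/
def Step (G G' : MG) : Prop := DeltaYYStep G G' ∨ YYDeltaStep G G'

/-- Δ-YY equivalence: `G` can be transformed into `H`, up to isomorphism, by a
finite sequence of Δ-YY operations. -/
def DYYEquiv : MG → MG → Prop :=
  Relation.EqvGen (fun G G' => Step G G' ∨ Iso G G')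

/-- The Δ-YY equivalence class of `G` contains only finitely many isomorphism
classes of multigraphs. -/
def FiniteClass (G : MG) : Prop :=
  ∃ S : Finset MG, ∀ H : MG, DYYEquiv G H → ∃ H' ∈ S, Iso H H'

/-- Connectivity: nonempty, and any two vertices are joined by a path. -/
def Connected (G : MG) : Prop :=
  Nonempty G.V ∧ ∀ u v : G.V, Relation.ReflTransGen G.Adj u v

/-- The multigraph obtained by deleting a set of vertices (and all edges
incident to them). -/
def deleteVerts (G : MG) (S : Set G.V) : MG where
  V := {y : G.V // y ∉ S}
  fin := by haveI := G.fin; infer_instance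
  mult a b := G.mult a.1 b.1
  symm := fun a b => G.symm a.1 b.1
  loopless := fun a => G.loopless a.1

/-- `G` is `k`-connected: it has more than `k` vertices and deleting any set of
fewer than `k` vertices leaves a connected multigraph. -/
def KConnected (G : MG) (k : ℕ) : Prop :=
  k < G.order ∧ ∀ S : Set G.V, S.ncard < k → (G.deleteVerts S).Connected

/-- `G` is planar: it has a drawing in the plane in which vertices are distinct
points, every edge (each parallel edge separately) is a continuous injective
arc joining the points of its endpoints, no arc passes through a vertex point
in its interior, and the interiors of the arcs of distinct edges are disjoint.
The arc of the `k`-th edge from `v` to `u` is the reverse of the arc of the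
`k`-th edge from `u` to `v` (they are the same edge drawn once). -/
def IsPlanar (G : MG) : Prop :=
  ∃ (pos : G.V → ℝ × ℝ) (γ : G.V → G.V → ℕ → C(unitInterval, ℝ × ℝ)),
    Function.Injective pos ∧
    (∀ u v k, k < G.mult u v →
      γ u v k 0 = pos u ∧ γ u v k 1 = pos v ∧ Function.Injective (γ u v k)) ∧
    (∀ u v k (t : unitInterval), γ v u k t = γ u v k (unitInterval.symm t)) ∧
    (∀ u v k, k < G.mult u v → ∀ t : unitInterval, t ≠ 0 → t ≠ 1 →
      ∀ z : G.V, γ u v k t ≠ pos z) ∧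
    (∀ u v k u' v' k', k < G.mult u v → k' < G.mult u' v' →
      (s(u, v) ≠ s(u', v') ∨ k ≠ k') →
      ∀ t t' : unitInterval, t ≠ 0 → t ≠ 1 → t' ≠ 0 → t' ≠ 1 →
        γ u v k t ≠ γ u' v' k' t')

/-- An independent set: no two of its vertices are adjacent. -/
def IsIndepSet (G : MG) (S : Set G.V) : Prop :=
  ∀ u ∈ S, ∀ v ∈ S, ¬ G.Adj u v

/-- The independence number `α(G)`: the maximum size of an independent set. -/
def indepNum (G : MG) : ℕ :=
  sSup {n | ∃ S : Set G.V, G.IsIndepSet S ∧ S.ncard = n}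

/-- The number of non-empty connections, i.e. the number of edges of the
simplification `G^S`. -/
def numConn (G : MG) : ℕ := {p : Sym2 G.V | G.multS p ≠ 0}.ncard

/-- The cyclomatic number `m - n + 1` of the simplification `G^S` of `G`. -/
def cyclomaticS (G : MG) : ℤ := (G.numConn : ℤ) - (G.order : ℤ) + 1

/-- `AddOnAt G a S` : the vertex set `S` of `G` carries (a subgraph copy of) an
add-on whose addition vertex is `a`.  An add-on of length 0 is a double edge or
a delta; an add-on of length `n ≥ 1` is a 4-cycle `a b c d` with the
connections `ab`, `ad` of size 1 and `bc`, `cd` of size 2, glued at `c` to an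
add-on of length `n - 1`. -/
inductive AddOnAt (G : MG) : G.V → Set G.V → Prop
  | double (a b : G.V) : a ≠ b → 2 ≤ G.mult a b → AddOnAt G a {a, b}
  | delta (a b c : G.V) : a ≠ b → a ≠ c → b ≠ c →
      1 ≤ G.mult a b → 1 ≤ G.mult a c → 1 ≤ G.mult b c → AddOnAt G a {a, b, c}
  | link (a b c d : G.V) (S : Set G.V) :
      a ≠ b → a ≠ c → a ≠ d → b ≠ c → b ≠ d → c ≠ d →
      1 ≤ G.mult a b → 1 ≤ G.mult a d → 2 ≤ G.mult b c → 2 ≤ G.mult c d →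
      AddOnAt G c S → S ∩ {a, b, d} = ∅ → AddOnAt G a ({a, b, d} ∪ S)

/-- `G` contains one of the four families of excluded subgraphs. -/
def HasExcluded (G : MG) : Prop :=
  -- (1) a 3-cycle in which at least one connection has size at least 2
  (∃ a b c : G.V, a ≠ b ∧ a ≠ c ∧ b ≠ c ∧
      2 ≤ G.mult a b ∧ 1 ≤ G.mult a c ∧ 1 ≤ G.mult b c) ∨
  -- (2) a 4-cycle with at least three connections of size at least 2 and an
  -- add-on glued at a vertex incident to two of them
  (∃ a b c d : G.V, ∃ S : Set G.V,
      a ≠ b ∧ a ≠ c ∧ a ≠ d ∧ b ≠ c ∧ b ≠ d ∧ c ≠ d ∧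
      2 ≤ G.mult a b ∧ 2 ≤ G.mult b c ∧ 2 ≤ G.mult c d ∧ 1 ≤ G.mult d a ∧
      AddOnAt G b S ∧ S ∩ {a, c, d} = ∅) ∨
  -- (3) a 5-cycle with all connections of size at least 2 and add-ons glued at
  -- two non-adjacent vertices of the cycle
  (∃ v₀ v₁ v₂ v₃ v₄ : G.V, ∃ S T : Set G.V,
      v₀ ≠ v₁ ∧ v₀ ≠ v₂ ∧ v₀ ≠ v₃ ∧ v₀ ≠ v₄ ∧ v₁ ≠ v₂ ∧ v₁ ≠ v₃ ∧ v₁ ≠ v₄ ∧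
      v₂ ≠ v₃ ∧ v₂ ≠ v₄ ∧ v₃ ≠ v₄ ∧
      2 ≤ G.mult v₀ v₁ ∧ 2 ≤ G.mult v₁ v₂ ∧ 2 ≤ G.mult v₂ v₃ ∧
      2 ≤ G.mult v₃ v₄ ∧ 2 ≤ G.mult v₄ v₀ ∧
      AddOnAt G v₀ S ∧ AddOnAt G v₂ T ∧
      S ∩ {v₁, v₂, v₃, v₄} = ∅ ∧ T ∩ {v₀, v₁, v₃, v₄} = ∅ ∧ S ∩ T = ∅) ∨
  -- (4) a 4-cycle with three connections of size at least 2, whose fourth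
  -- connection has size 1 and lies in a triangle, with add-ons glued at both
  -- vertices of that connection
  (∃ a b c d e : G.V, ∃ S T : Set G.V,
      a ≠ b ∧ a ≠ c ∧ a ≠ d ∧ a ≠ e ∧ b ≠ c ∧ b ≠ d ∧ b ≠ e ∧
      c ≠ d ∧ c ≠ e ∧ d ≠ e ∧
      2 ≤ G.mult a b ∧ 2 ≤ G.mult b c ∧ 2 ≤ G.mult c d ∧ G.mult d a = 1 ∧
      1 ≤ G.mult d e ∧ 1 ≤ G.mult e a ∧
      AddOnAt G a S ∧ AddOnAt G d T ∧
      S ∩ {b, c, d, e} = ∅ ∧ T ∩ {a, b, c, e} = ∅ ∧ S ∩ T = ∅)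

/-- The doubling of a simple graph: every edge is replaced by a connection of
size 2. -/
def doubling {V : Type} [Fintype V] (H : SimpleGraph V) : MG where
  V := V
  fin := inferInstance
  mult u v := if H.Adj u v then 2 else 0
  symm := by
    intro u v
    try dsimp only
    by_cases h : H.Adj u v
    · rw [if_pos h, if_pos h.symm]
    · rw [if_neg h, if_neg fun h' => h h'.symm]
  loopless := fun v => if_neg (H.loopless.irrefl v)

end MG

end

noncomputable section

namespace DYY

/-- `x` lies strictly between `a` and `b`. -/
def Sep (a b x : ℝ) : Prop := (a < x ∧ x < b) ∨ (b < x ∧ x < a)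

lemma sep_comm (a b : ℝ) : Sep a b = Sep b a := funext fun _ => propext or_comm

lemma sep_abs₁ {a b x : ℝ} (h : Sep a b x) : |a - x| < |a - b| := by
  rcases h with ⟨h1, h2⟩ | ⟨h1, h2⟩
  · rw [abs_of_nonpos (by linarith), abs_of_nonpos (by linarith)]; linarith
  · rw [abs_of_nonneg (by linarith), abs_of_nonneg (by linarith)]; linarith

lemma sep_abs₂ {a b x : ℝ} (h : Sep a b x) : |x - b| < |a - b| := by
  rcases h with ⟨h1, h2⟩ | ⟨h1, h2⟩
  · rw [abs_of_nonpos (by linarith), abs_of_nonpos (by linarith)]; linarith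
  · rw [abs_of_nonneg (by linarith), abs_of_nonneg (by linarith)]; linarith

def NCross (θ : Fin 3 × Fin 2 → ℝ) (X Y Z W : Fin 3 × Fin 2) : Prop :=
  (Sep (θ X) (θ Y) (θ Z) ↔ Sep (θ X) (θ Y) (θ W)) ∨
  (Sep (θ Z) (θ W) (θ X) ↔ Sep (θ Z) (θ W) (θ Y))

lemma NCross.swap₁ {θ : Fin 3 × Fin 2 → ℝ} {X Y Z W} (h : NCross θ X Y Z W) :
    NCross θ Y X Z W := by
  unfold NCross at *
  rw [sep_comm (θ Y) (θ X)]
  rcases h with h | h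
  · exact Or.inl h
  · exact Or.inr h.symm

lemma NCross.swap₂ {θ : Fin 3 × Fin 2 → ℝ} {X Y Z W} (h : NCross θ X Y Z W) :
    NCross θ X Y W Z := by
  unfold NCross at *
  rw [sep_comm (θ W) (θ Z)]
  rcases h with h | h
  · exact Or.inl h.symm
  · exact Or.inr h

lemma NCross.sym {θ : Fin 3 × Fin 2 → ℝ} {X Y Z W} (h : NCross θ X Y Z W) :
    NCross θ Z W X Y := by
  rcases h with h | h
  · exact Or.inr h
  · exact Or.inl h

lemma fin2_ne_add_one (y : Fin 2) : y ≠ y + 1 := by fin_cases y <;> decide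

private lemma endgame (θ : Fin 3 × Fin 2 → ℝ) (x1 x2 la : Fin 3) (y1 y2 z z' : Fin 2)
    (h12 : x1 ≠ x2) (hla1 : la ≠ x1) (hla2 : la ≠ x2) (hzz : z ≠ z')
    (hNC1 : NCross θ (x1, y1) (x2, y2) (la, z) (x1, y1 + 1))
    (hNC2 : NCross θ (x1, y1) (x2, y2) (la, z') (x2, y2 + 1))
    (hNC3 : NCross θ (la, z) (x1, y1 + 1) (la, z') (x2, y2 + 1)) :
    ∃ m1 m2 m3 m4 m5 m6 : Fin 2, m1 ≠ m3 ∧ m2 ≠ m5 ∧ m4 ≠ m6 ∧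
      NCross θ (0, m1) (1, m2) (0, m3) (2, m4) ∧
      NCross θ (0, m1) (1, m2) (1, m5) (2, m6) ∧
      NCross θ (0, m3) (2, m4) (1, m5) (2, m6) := by
  fin_cases x1 <;> fin_cases x2 <;> fin_cases la <;>
    first
    | exact absurd rfl h12
    | exact absurd rfl hla1
    | exact absurd rfl hla2
    | exact ⟨y1, y2, y1 + 1, z, y2 + 1, z', fin2_ne_add_one y1, fin2_ne_add_one y2, hzz,
        hNC1.swap₂, hNC2.swap₂, hNC3.swap₁.swap₂⟩
    | exact ⟨y1 + 1, z, y1, y2, z', y2 + 1, (fin2_ne_add_one y1).symm, hzz,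
        fin2_ne_add_one y2, hNC1.sym.swap₁, hNC3.swap₁, hNC2⟩
    | exact ⟨y2, y1, y2 + 1, z', y1 + 1, z, fin2_ne_add_one y2, fin2_ne_add_one y1,
        (Ne.symm hzz), hNC2.swap₁.swap₂, hNC1.swap₁.swap₂, hNC3.sym.swap₁.swap₂⟩
    | exact ⟨z, y1 + 1, z', y2 + 1, y1, y2, hzz, (fin2_ne_add_one y1).symm,
        (fin2_ne_add_one y2).symm, hNC3, hNC1.sym, hNC2.sym⟩
    | exact ⟨y2 + 1, z', y2, y1, z, y1 + 1, (fin2_ne_add_one y2).symm, (Ne.symm hzz),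
        fin2_ne_add_one y1, hNC2.sym.swap₁.swap₂, hNC3.sym.swap₁, hNC1.swap₁⟩
    | exact ⟨z', y2 + 1, z, y1 + 1, y2, y1, (Ne.symm hzz), (fin2_ne_add_one y2).symm,
        (fin2_ne_add_one y1).symm, hNC3.sym, hNC2.sym.swap₂, hNC1.sym.swap₂⟩


lemma matching (θ : Fin 3 × Fin 2 → ℝ) :
    ∃ m1 m2 m3 m4 m5 m6 : Fin 2, m1 ≠ m3 ∧ m2 ≠ m5 ∧ m4 ≠ m6 ∧
      NCross θ (0, m1) (1, m2) (0, m3) (2, m4) ∧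
      NCross θ (0, m1) (1, m2) (1, m5) (2, m6) ∧
      NCross θ (0, m3) (2, m4) (1, m5) (2, m6) := by
  -- stage 1: globally adjacent pair with distinct labels
  set P1 : Finset ((Fin 3 × Fin 2) × (Fin 3 × Fin 2)) :=
    Finset.univ.filter (fun p => p.1.1 ≠ p.2.1) with hP1
  have hP1ne : P1.Nonempty := ⟨((0, 0), (1, 0)), by simp [hP1]⟩
  obtain ⟨q1, hq1mem, hq1min⟩ := P1.exists_min_image (fun p => |θ p.1 - θ p.2|) hP1ne
  obtain ⟨i1, j1⟩ := q1
  have hl1 : i1.1 ≠ j1.1 := by simpa [hP1] using hq1mem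
  have hadj1 : ∀ k, ¬ Sep (θ i1) (θ j1) (θ k) := by
    intro k hk
    by_cases hki : k.1 = i1.1
    · have hmem : (k, j1) ∈ P1 := by simp [hP1, hki, hl1]
      have := hq1min _ hmem
      have h2 := sep_abs₂ hk
      simp only at this
      linarith
    · have hmem : (i1, k) ∈ P1 := by simp [hP1, Ne.symm hki]
      have := hq1min _ hmem
      have h1 := sep_abs₁ hk
      simp only at this
      linarith
  obtain ⟨la, hlai, hlaj⟩ : ∃ la : Fin 3, la ≠ i1.1 ∧ la ≠ j1.1 := by
    have h3 : ∀ x y : Fin 3, x ≠ y → ∃ z : Fin 3, z ≠ x ∧ z ≠ y := by decide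
    exact h3 _ _ hl1
  -- stage 2
  set A : Fin 3 × Fin 2 := (la, 0) with hA
  set B : Fin 3 × Fin 2 := (la, 1) with hB
  set C : Fin 3 × Fin 2 := (i1.1, i1.2 + 1) with hC
  set D : Fin 3 × Fin 2 := (j1.1, j1.2 + 1) with hD
  set P2 : Finset ((Fin 3 × Fin 2) × (Fin 3 × Fin 2)) := {(A, C), (A, D), (B, C), (B, D)}
    with hP2
  obtain ⟨q2, hq2mem, hq2min⟩ := P2.exists_min_image (fun p => |θ p.1 - θ p.2|)
    ⟨(A, C), by simp [hP2]⟩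
  have hq2 : q2 = (A, C) ∨ q2 = (A, D) ∨ q2 = (B, C) ∨ q2 = (B, D) := by
    simpa [hP2] using hq2mem
  have key : ∀ i2 j2 r1 r2 : Fin 3 × Fin 2, q2 = (i2, j2) →
      (r1, j2) ∈ P2 → (i2, r2) ∈ P2 →
      ¬ Sep (θ i2) (θ j2) (θ r1) ∧ ¬ Sep (θ i2) (θ j2) (θ r2) := by
    rintro i2 j2 r1 r2 rfl hm1 hm2
    constructor
    · intro hk
      have := hq2min _ hm1
      have h2 := sep_abs₂ hk
      simp only at this; linarith
    · intro hk
      have := hq2min _ hm2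
      have h1 := sep_abs₁ hk
      simp only at this; linarith
  obtain ⟨x1, y1⟩ := i1
  obtain ⟨x2, y2⟩ := j1
  simp only at hl1 hlai hlaj hadj1 key hC hD
  have main : ∀ z z2 : Fin 2, z ≠ z2 →
      (¬ Sep (θ (la, z)) (θ C) (θ (la, z2)) ∧ ¬ Sep (θ (la, z)) (θ C) (θ D)) →
      ∃ m1 m2 m3 m4 m5 m6 : Fin 2, m1 ≠ m3 ∧ m2 ≠ m5 ∧ m4 ≠ m6 ∧
      NCross θ (0, m1) (1, m2) (0, m3) (2, m4) ∧
      NCross θ (0, m1) (1, m2) (1, m5) (2, m6) ∧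
      NCross θ (0, m3) (2, m4) (1, m5) (2, m6) := by
    rintro z z2 hzz ⟨hn1, hn2⟩
    refine endgame θ x1 x2 la y1 y2 z z2 hl1 hlai hlaj hzz ?_ ?_ ?_
    · exact Or.inl (iff_of_false (hadj1 (la, z)) (hadj1 (x1, y1 + 1)))
    · exact Or.inl (iff_of_false (hadj1 (la, z2)) (hadj1 (x2, y2 + 1)))
    · exact Or.inl (iff_of_false hn1 hn2)
  have main' : ∀ z z2 : Fin 2, z ≠ z2 →
      (¬ Sep (θ (la, z)) (θ D) (θ (la, z2)) ∧ ¬ Sep (θ (la, z)) (θ D) (θ C)) →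
      ∃ m1 m2 m3 m4 m5 m6 : Fin 2, m1 ≠ m3 ∧ m2 ≠ m5 ∧ m4 ≠ m6 ∧
      NCross θ (0, m1) (1, m2) (0, m3) (2, m4) ∧
      NCross θ (0, m1) (1, m2) (1, m5) (2, m6) ∧
      NCross θ (0, m3) (2, m4) (1, m5) (2, m6) := by
    rintro z z2 hzz ⟨hn1, hn2⟩
    refine endgame θ x2 x1 la y2 y1 z z2 (Ne.symm hl1) hlaj hlai hzz ?_ ?_ ?_
    · exact Or.inl (iff_of_false (by rw [sep_comm]; exact hadj1 (la, z))
        (by rw [sep_comm]; exact hadj1 (x2, y2 + 1)))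
    · exact Or.inl (iff_of_false (by rw [sep_comm]; exact hadj1 (la, z2))
        (by rw [sep_comm]; exact hadj1 (x1, y1 + 1)))
    · exact Or.inl (iff_of_false hn1 hn2)
  rcases hq2 with h | h | h | h
  · exact main 0 1 (by decide) (key A C B D h (by simp [hP2]) (by simp [hP2]))
  · exact main' 0 1 (by decide) (key A D B C h (by simp [hP2]) (by simp [hP2]))
  · exact main 1 0 (by decide) (key B C A D h (by simp [hP2]) (by simp [hP2]))
  · exact main' 1 0 (by decide) (key B D A C h (by simp [hP2]) (by simp [hP2]))


open Real Complex
lemma chord_im (α β ϑ : ℝ) :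
    (Real.cos β - Real.cos α) * (Real.sin ϑ - Real.sin α)
      - (Real.sin β - Real.sin α) * (Real.cos ϑ - Real.cos α)
    = 4 * Real.sin ((β - α) / 2) * Real.sin ((ϑ - α) / 2) * Real.sin ((ϑ - β) / 2) := by
  have h : (ϑ - β) / 2 = (ϑ + α) / 2 - (β + α) / 2 := by ring
  simp only [Real.cos_sub_cos, Real.sin_sub_sin]
  rw [h, Real.sin_sub]
  ring

lemma sin_half_pos {x : ℝ} (h0 : 0 < x) (h2 : x < 2 * π) : 0 < Real.sin (x / 2) :=
  Real.sin_pos_of_pos_of_lt_pi (by linarith) (by linarith)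

lemma sin_half_neg {x : ℝ} (h0 : x < 0) (h2 : -(2 * π) < x) : Real.sin (x / 2) < 0 := by
  have : 0 < Real.sin (-x / 2) := sin_half_pos (by linarith) (by linarith)
  have hx : Real.sin (-x / 2) = -Real.sin (x / 2) := by
    rw [show -x / 2 = -(x / 2) by ring, Real.sin_neg]
  linarith [hx ▸ this]

/-- Sign of the half-angle product. -/
lemma g_sign {α β ϑ : ℝ} (hα : α ∈ Set.Ioc (-π) π) (hβ : β ∈ Set.Ioc (-π) π)
    (hϑ : ϑ ∈ Set.Ioc (-π) π) (hϑα : ϑ ≠ α) (hϑβ : ϑ ≠ β) :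
    (Sep α β ϑ → Real.sin ((ϑ - α) / 2) * Real.sin ((ϑ - β) / 2) < 0) ∧
    (¬ Sep α β ϑ → 0 < Real.sin ((ϑ - α) / 2) * Real.sin ((ϑ - β) / 2)) := by
  obtain ⟨hα1, hα2⟩ := hα
  obtain ⟨hβ1, hβ2⟩ := hβ
  obtain ⟨hϑ1, hϑ2⟩ := hϑ
  have pi_pos := Real.pi_pos
  have h1 : ϑ - α < 2 * π := by linarith
  have h1' : -(2 * π) < ϑ - α := by linarith
  have h2 : ϑ - β < 2 * π := by linarith
  have h2' : -(2 * π) < ϑ - β := by linarith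
  constructor
  · rintro (⟨ha, hb⟩ | ⟨ha, hb⟩)
    · have p1 : 0 < Real.sin ((ϑ - α) / 2) := sin_half_pos (by linarith) h1
      have p2 : Real.sin ((ϑ - β) / 2) < 0 := sin_half_neg (by linarith) h2'
      nlinarith
    · have p1 : Real.sin ((ϑ - α) / 2) < 0 := sin_half_neg (by linarith) h1'
      have p2 : 0 < Real.sin ((ϑ - β) / 2) := sin_half_pos (by linarith) h2
      nlinarith
  · intro hns
    unfold Sep at hns
    push_neg at hns
    obtain ⟨hc, hd⟩ := hns
    rcases lt_or_gt_of_ne hϑα with h | h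
    · -- ϑ < α ; then also ϑ < β or ϑ > β: if β < ϑ impossible? check
      rcases lt_or_gt_of_ne hϑβ with h' | h'
      · have p1 : Real.sin ((ϑ - α) / 2) < 0 := sin_half_neg (by linarith) h1'
        have p2 : Real.sin ((ϑ - β) / 2) < 0 := sin_half_neg (by linarith) h2'
        nlinarith
      · -- β < ϑ < α : contradiction with hd
        have := hd h'
        linarith
    · rcases lt_or_gt_of_ne hϑβ with h' | h'
      · -- α < ϑ < β : contradiction with hc
        have := hc h
        linarith
      · have p1 : 0 < Real.sin ((ϑ - α) / 2) := sin_half_pos (by linarith) h1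
        have p2 : 0 < Real.sin ((ϑ - β) / 2) := sin_half_pos (by linarith) h2
        nlinarith

/-- Points of a segment between two circle points. -/
lemma seg_in_ball {c : ℂ} {r : ℝ} (hr : 0 < r) {P Q : ℂ}
    (hP : dist P c ≤ r) (hQ : dist Q c ≤ r) (hPQ : P ≠ Q) :
    ∀ z ∈ segment ℝ P Q, dist z c ≤ r ∧ (z ≠ P → z ≠ Q → dist z c < r) := by
  intro z hz
  constructor
  · exact (convex_closedBall c r).segment_subset hP hQ hz
  · intro h1 h2
    have hzo : z ∈ openSegment ℝ P Q := mem_openSegment_of_ne_left_right h1.symm h2.symm hz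
    have := (strictConvex_closedBall ℝ c r).openSegment_subset hP hQ hPQ hzo
    rwa [interior_closedBall c (ne_of_gt hr)] at this

/-- The coordinates of a point on the circle of radius `r` around `c`. -/
lemma circle_coord {c : ℂ} {r : ℝ} {X : ℂ} (hX : ‖X - c‖ = r) :
    X.re = c.re + r * Real.cos (X - c).arg ∧ X.im = c.im + r * Real.sin (X - c).arg := by
  have h := Complex.norm_mul_exp_arg_mul_I (X - c)
  rw [hX] at h
  constructor
  · have := congrArg Complex.re h
    simp [Complex.mul_re, Complex.exp_ofReal_mul_I_re, Complex.exp_ofReal_mul_I_im,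
      Complex.sub_re] at this
    linarith
  · have := congrArg Complex.im h
    simp [Complex.mul_im, Complex.exp_ofReal_mul_I_re, Complex.exp_ofReal_mul_I_im,
      Complex.sub_im] at this
    linarith

/-- Two chords of a circle whose endpoints do not interleave are disjoint. -/
lemma chords_disjoint {c : ℂ} {r : ℝ} (hr : 0 < r) {P Q R S : ℂ}
    (hP : ‖P - c‖ = r) (hQ : ‖Q - c‖ = r)
    (hR : ‖R - c‖ = r) (hS : ‖S - c‖ = r)
    (hPQ : P ≠ Q) (hRP : R ≠ P) (hRQ : R ≠ Q) (hSP : S ≠ P) (hSQ : S ≠ Q)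
    (hsep : Sep (P - c).arg (Q - c).arg (R - c).arg ↔ Sep (P - c).arg (Q - c).arg (S - c).arg) :
    ∀ z ∈ segment ℝ P Q, ∀ z' ∈ segment ℝ R S, z ≠ z' := by
  set α := (P - c).arg with hal
  set β := (Q - c).arg with hbe
  set F : ℂ → ℝ := fun z =>
    (Q.re - P.re) * (z.im - P.im) - (Q.im - P.im) * (z.re - P.re) with hF
  -- F vanishes on segment P Q
  have hFseg : ∀ z ∈ segment ℝ P Q, F z = 0 := by
    intro z hz
    rw [segment_eq_image'] at hz
    obtain ⟨t, _, rfl⟩ := hz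
    simp only [hF, Complex.add_re, Complex.add_im, Complex.real_smul, Complex.mul_re,
      Complex.mul_im, Complex.ofReal_re, Complex.ofReal_im, Complex.sub_re, Complex.sub_im]
    ring
  -- arg is injective on the circle
  have harginj : ∀ X Y : ℂ, ‖X - c‖ = r → ‖Y - c‖ = r →
      X ≠ Y → (X - c).arg ≠ (Y - c).arg := by
    intro X Y hX hY hXY h
    exact hXY (by
      have := Complex.ext_norm_arg (x := X - c) (y := Y - c) (by rw [hX, hY]) h
      have h2 : X - c + c = Y - c + c := by rw [this]
      simpa using h2)
  have hab : α ≠ β := harginj P Q hP hQ hPQ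
  -- value of F at a circle point
  have hFval : ∀ X : ℂ, ‖X - c‖ = r →
      F X = r ^ 2 * (4 * Real.sin ((β - α) / 2) * Real.sin (((X - c).arg - α) / 2)
        * Real.sin (((X - c).arg - β) / 2)) := by
    intro X hX
    obtain ⟨e1, e2⟩ := circle_coord hX
    obtain ⟨p1, p2⟩ := circle_coord hP
    obtain ⟨q1, q2⟩ := circle_coord hQ
    rw [hF]
    simp only []
    rw [e1, e2, p1, p2, q1, q2]
    have := chord_im α β (X - c).arg
    nlinarith [this]
  -- range facts for arg
  have hrange : ∀ X : ℂ, (X - c).arg ∈ Set.Ioc (-Real.pi) Real.pi :=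
    fun X => ⟨Complex.neg_pi_lt_arg _, Complex.arg_le_pi _⟩
  -- sign of the common factor
  have hs0 : Real.sin ((β - α) / 2) ≠ 0 := by
    rcases lt_or_gt_of_ne hab with h | h
    · have h1 : β - α < 2 * Real.pi := by
        have := (hrange P).1; have := (hrange Q).2; rw [← hal, ← hbe] at *; linarith
      exact ne_of_gt (sin_half_pos (by linarith) h1)
    · have h1 : -(2 * Real.pi) < β - α := by
        have := (hrange P).2; have := (hrange Q).1; rw [← hal, ← hbe] at *; linarith
      exact ne_of_lt (sin_half_neg (by linarith) h1)
  -- F R and F S have the same strict sign: their product is positive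
  have hsame : 0 < F R * F S := by
    have gR := g_sign (hrange P) (hrange Q) (hrange R) (harginj R P hR hP hRP)
      (harginj R Q hR hQ hRQ)
    have gS := g_sign (hrange P) (hrange Q) (hrange S) (harginj S P hS hP hSP)
      (harginj S Q hS hQ hSQ)
    rw [← hal, ← hbe] at gR gS
    have hgg : 0 < (Real.sin (((R - c).arg - α) / 2) * Real.sin (((R - c).arg - β) / 2)) *
        (Real.sin (((S - c).arg - α) / 2) * Real.sin (((S - c).arg - β) / 2)) := by
      by_cases h : Sep α β (R - c).arg
      · exact mul_pos_of_neg_of_neg (gR.1 h) (gS.1 (hsep.mp h))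
      · exact mul_pos (gR.2 h) (gS.2 (fun hh => h (hsep.mpr hh)))
    have hprod : F R * F S = (4 * r ^ 2 * Real.sin ((β - α) / 2)) ^ 2 *
        ((Real.sin (((R - c).arg - α) / 2) * Real.sin (((R - c).arg - β) / 2)) *
         (Real.sin (((S - c).arg - α) / 2) * Real.sin (((S - c).arg - β) / 2))) := by
      rw [hFval R hR, hFval S hS]; ring
    rw [hprod]
    have h4 : (4 : ℝ) * r ^ 2 * Real.sin ((β - α) / 2) ≠ 0 := by
      intro h
      rcases mul_eq_zero.mp h with h | h
      · rcases mul_eq_zero.mp h with h | h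
        · norm_num at h
        · exact absurd h (by positivity)
      · exact hs0 h
    exact mul_pos (sq_pos_of_ne_zero h4) hgg
  -- conclude
  intro z hz z' hz' hzz
  have h0 : F z = 0 := hFseg z hz
  have : F z' ≠ 0 := by
    rw [segment_eq_image'] at hz'
    obtain ⟨t, ht, rfl⟩ := hz'
    have haff : F (R + t • (S - R)) = (1 - t) * F R + t * F S := by
      simp only [hF, Complex.add_re, Complex.add_im, Complex.real_smul, Complex.mul_re,
        Complex.mul_im, Complex.ofReal_re, Complex.ofReal_im, Complex.sub_re, Complex.sub_im]
      ring
    rw [haff]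
    obtain ⟨ht0, ht1⟩ := ht
    rcases mul_pos_iff.mp hsame with ⟨h1, h2⟩ | ⟨h1, h2⟩
    · rcases lt_or_eq_of_le ht1 with h | h
      · have k1 := mul_pos (by linarith : (0:ℝ) < 1 - t) h1
        have k2 := mul_nonneg ht0 h2.le
        intro hzero; linarith
      · subst h; intro hzero; linarith
    · rcases lt_or_eq_of_le ht1 with h | h
      · have k1 := mul_neg_of_pos_of_neg (by linarith : (0:ℝ) < 1 - t) h1
        have k2 := mul_nonpos_of_nonneg_of_nonpos ht0 h2.le
        intro hzero; linarith
      · subst h; intro hzero; linarith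
  exact this (by rw [← hzz, h0])



open Set

lemma path_trans_injective {X : Type*} [TopologicalSpace X] {a b c : X}
    (p : Path a b) (q : Path b c) (hp : Function.Injective ⇑p) (hq : Function.Injective ⇑q)
    (h : Set.range ⇑p ∩ Set.range ⇑q ⊆ {b}) : Function.Injective ⇑(p.trans q) := by
  intro t t' heq
  rw [Path.trans_apply, Path.trans_apply] at heq
  split_ifs at heq with h1 h2 h2
  · have := congrArg Subtype.val (hp heq)
    simp only at this
    exact Subtype.ext (by linarith)
  · exfalso
    have hb : p ⟨2 * (t : ℝ), by constructor <;> [linarith [t.2.1]; linarith]⟩ = b := by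
      have hmem : p ⟨2 * (t : ℝ), _⟩ ∈ Set.range ⇑p ∩ Set.range ⇑q :=
        ⟨⟨_, rfl⟩, ⟨_, heq.symm⟩⟩
      exact h hmem
    have hq0 : q ⟨2 * (t' : ℝ) - 1, by constructor <;> [linarith; linarith [t'.2.2]]⟩ = b := by
      rw [← heq]; exact hb
    have h1' := hp (hb.trans p.target.symm)
    have h2' := hq (hq0.trans q.source.symm)
    have e1 := congrArg Subtype.val h1'
    have e2 := congrArg Subtype.val h2'
    simp only [Set.Icc.coe_one, Set.Icc.coe_zero] at e1 e2
    have : (t' : ℝ) = 1 / 2 := by linarith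
    exact h2 (by rw [this])
  · exfalso
    have hb : p ⟨2 * (t' : ℝ), by constructor <;> [linarith [t'.2.1]; linarith]⟩ = b := by
      have hmem : p ⟨2 * (t' : ℝ), _⟩ ∈ Set.range ⇑p ∩ Set.range ⇑q :=
        ⟨⟨_, rfl⟩, ⟨_, heq⟩⟩
      exact h hmem
    have hq0 : q ⟨2 * (t : ℝ) - 1, by constructor <;> [linarith; linarith [t.2.2]]⟩ = b := by
      rw [heq]; exact hb
    have h1' := hp (hb.trans p.target.symm)
    have h2' := hq (hq0.trans q.source.symm)
    have e1 := congrArg Subtype.val h1'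
    have e2 := congrArg Subtype.val h2'
    simp only [Set.Icc.coe_one, Set.Icc.coe_zero] at e1 e2
    have : (t : ℝ) = 1 / 2 := by linarith
    exact h1 (by rw [this])
  · have := congrArg Subtype.val (hq heq)
    simp only at this
    exact Subtype.ext (by linarith)

/-- The reparametrisation map `[0,1] → [s,1]`. -/
def cutFn (s : unitInterval) (t : unitInterval) : unitInterval :=
  ⟨s.1 + t.1 * (1 - s.1), by
    constructor
    · have := mul_nonneg t.2.1 (by linarith [s.2.2] : (0:ℝ) ≤ 1 - s.1)
      linarith [s.2.1]
    · nlinarith [t.2.2, s.2.2, s.2.1, t.2.1]⟩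

lemma continuous_cutFn (s : unitInterval) : Continuous (cutFn s) := by
  apply Continuous.subtype_mk
  exact (continuous_const.add ((continuous_subtype_val).mul continuous_const))

@[simp] lemma cutFn_zero (s : unitInterval) : cutFn s 0 = s := by
  unfold cutFn; ext; simp

@[simp] lemma cutFn_one (s : unitInterval) : cutFn s 1 = 1 := by
  unfold cutFn; ext; simp

lemma le_cutFn (s t : unitInterval) : s.1 ≤ (cutFn s t).1 := by
  unfold cutFn
  have := mul_nonneg t.2.1 (by linarith [s.2.2] : (0:ℝ) ≤ 1 - s.1)
  simp only
  linarith

lemma cutFn_lt (s : unitInterval) (hs : s.1 < 1) {t : unitInterval} (ht : t ≠ 0) :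
    s.1 < (cutFn s t).1 := by
  unfold cutFn
  have ht' : 0 < t.1 := lt_of_le_of_ne t.2.1 (fun hh => ht (Subtype.ext hh.symm))
  have := mul_pos ht' (by linarith : (0:ℝ) < 1 - s.1)
  simp only
  linarith

lemma cutFn_lt_one (s : unitInterval) (hs : s.1 < 1) {t : unitInterval} (ht : t ≠ 1) :
    (cutFn s t).1 < 1 := by
  unfold cutFn
  have ht' : t.1 < 1 := lt_of_le_of_ne t.2.2 (fun hh => ht (Subtype.ext hh))
  simp only
  nlinarith [t.2.1]

lemma cutFn_injective (s : unitInterval) (hs : s.1 < 1) : Function.Injective (cutFn s) := by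
  intro t t' h
  have := congrArg Subtype.val h
  unfold cutFn at this
  simp only at this
  have h1 : (0:ℝ) < 1 - s.1 := by linarith
  exact Subtype.ext (by
    have := mul_right_cancel₀ (ne_of_gt h1) (by linarith : t.1 * (1 - s.1) = t'.1 * (1 - s.1))
    exact this)

/-- The straight segment as a path. -/
def segPath (P Q : ℂ) : Path P Q where
  toFun := fun t => P + t.1 • (Q - P)
  continuous_toFun := by
    apply Continuous.add continuous_const
    exact (continuous_subtype_val).smul continuous_const
  source' := by simp
  target' := by simp

lemma segPath_mem (P Q : ℂ) (t : unitInterval) : segPath P Q t ∈ segment ℝ P Q := by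
  rw [segment_eq_image']
  exact ⟨t.1, t.2, rfl⟩

lemma segPath_injective {P Q : ℂ} (h : P ≠ Q) : Function.Injective ⇑(segPath P Q) := by
  intro t t' heq
  have : (t.1 : ℝ) • (Q - P) = t'.1 • (Q - P) := by
    have := heq
    simp only [segPath, Path.coe_mk_mk] at this
    exact add_left_cancel this
  have hQP : Q - P ≠ 0 := sub_ne_zero.mpr (Ne.symm h)
  have := sub_eq_zero.mpr this
  rw [← sub_smul] at this
  rcases smul_eq_zero.mp this with h' | h'
  · exact Subtype.ext (by linarith [sub_eq_zero.mp (by exact_mod_cast h')])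
  · exact absurd h' hQP

/-- Last exit time of a path from a ball around its starting point. -/
lemma last_exit (f : C(unitInterval, ℂ)) (c : ℂ) (hf0 : f 0 = c) {ε : ℝ} (hε : 0 < ε)
    (hout : ε < dist (f 1) c) :
    ∃ s : unitInterval, 0 < s.1 ∧ s.1 < 1 ∧ dist (f s) c = ε ∧
      ∀ t : unitInterval, s.1 < t.1 → ε < dist (f t) c := by
  set g : ℝ → ℝ := fun x => dist (f (Set.projIcc 0 1 zero_le_one x)) c with hg
  have hgc : Continuous g := (f.continuous.comp continuous_projIcc).dist continuous_const
  set A := {x : ℝ | x ∈ Set.Icc (0:ℝ) 1 ∧ g x ≤ ε} with hA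
  have hgIcc : ∀ (x : ℝ) (hx : x ∈ Set.Icc (0:ℝ) 1), g x = dist (f ⟨x, hx⟩) c := by
    intro x hx
    simp only [hg, Set.projIcc_of_mem zero_le_one hx]
  have hA0 : (0:ℝ) ∈ A := by
    constructor
    · exact ⟨le_refl 0, zero_le_one⟩
    · rw [hgIcc 0 ⟨le_refl 0, zero_le_one⟩]
      have : (⟨(0:ℝ), _⟩ : unitInterval) = 0 := rfl
      rw [this, hf0]
      simp [hε.le]
  have hclosed : IsClosed A := (isClosed_Icc).inter (isClosed_le hgc continuous_const)
  have hcomp : IsCompact A := IsCompact.of_isClosed_subset isCompact_Icc hclosed (fun x hx => hx.1)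
  have hne : A.Nonempty := ⟨0, hA0⟩
  have hmem := hcomp.sSup_mem hne
  set s0 := sSup A with hs0
  obtain ⟨hs0Icc, hs0le⟩ := hmem
  have hub : ∀ x ∈ A, x ≤ s0 := fun x hx => le_csSup hcomp.bddAbove hx
  have hg1 : ε < g 1 := by rw [hgIcc 1 ⟨zero_le_one, le_refl 1⟩]; exact hout
  have hlt1 : s0 < 1 := by
    rcases lt_or_eq_of_le hs0Icc.2 with h | h
    · exact h
    · exfalso; rw [h] at hs0le; linarith
  have heps : g s0 = ε := by
    by_contra hne'
    have hlt : g s0 < ε := lt_of_le_of_ne hs0le hne'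
    have hca := hgc.continuousAt (x := s0)
    rw [Metric.continuousAt_iff] at hca
    obtain ⟨δ, hδ, hδ'⟩ := hca (ε - g s0) (by linarith)
    set x := min (s0 + δ / 2) 1 with hx
    have hxgt : s0 < x := lt_min (by linarith) hlt1
    have hxmem : x ∈ Set.Icc (0:ℝ) 1 := ⟨le_trans hs0Icc.1 hxgt.le, min_le_right _ _⟩
    have hdist : dist x s0 < δ := by
      rw [Real.dist_eq, abs_of_pos (by linarith)]
      have : x ≤ s0 + δ / 2 := min_le_left _ _
      linarith
    have := hδ' hdist
    rw [Real.dist_eq] at this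
    have hgx : g x ≤ ε := by
      have := abs_lt.mp this
      linarith
    exact absurd (hub x ⟨hxmem, hgx⟩) (not_le.2 hxgt)
  have hpos : 0 < s0 := by
    have hca := hgc.continuousAt (x := 0)
    rw [Metric.continuousAt_iff] at hca
    have hg0 : g 0 = 0 := by
      rw [hgIcc 0 ⟨le_refl 0, zero_le_one⟩]
      have : (⟨(0:ℝ), _⟩ : unitInterval) = 0 := rfl
      rw [this, hf0]; simp
    obtain ⟨δ, hδ, hδ'⟩ := hca ε hε
    set x := min (δ / 2) 1 with hx
    have hxpos : 0 < x := lt_min (by linarith) one_pos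
    have hxmem : x ∈ Set.Icc (0:ℝ) 1 := ⟨hxpos.le, min_le_right _ _⟩
    have hdist : dist x 0 < δ := by
      rw [Real.dist_eq, sub_zero, abs_of_pos hxpos]
      have : x ≤ δ / 2 := min_le_left _ _
      linarith
    have := hδ' hdist
    rw [Real.dist_eq, hg0, sub_zero] at this
    have hgx : g x ≤ ε := (le_of_lt (lt_of_le_of_lt (le_abs_self _) this))
    exact lt_of_lt_of_le hxpos (hub x ⟨hxmem, hgx⟩)
  refine ⟨⟨s0, hs0Icc⟩, hpos, hlt1, ?_, ?_⟩
  · rw [← hgIcc s0 hs0Icc]; exact heps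
  · intro t ht
    by_contra hc
    push_neg at hc
    have : t.1 ∈ A := ⟨t.2, by rw [hgIcc t.1 t.2]; simpa using hc⟩
    exact absurd (hub _ this) (not_le.2 ht)


/-- Planarity with drawing in an arbitrary topological space. -/
def PlanarIn (G : MG) (X : Type*) [TopologicalSpace X] : Prop :=
  ∃ (pos : G.V → X) (γ : G.V → G.V → ℕ → C(unitInterval, X)),
    Function.Injective pos ∧
    (∀ u v k, k < G.mult u v →
      γ u v k 0 = pos u ∧ γ u v k 1 = pos v ∧ Function.Injective (γ u v k)) ∧
    (∀ u v k (t : unitInterval), γ v u k t = γ u v k (unitInterval.symm t)) ∧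
    (∀ u v k, k < G.mult u v → ∀ t : unitInterval, t ≠ 0 → t ≠ 1 →
      ∀ z : G.V, γ u v k t ≠ pos z) ∧
    (∀ u v k u' v' k', k < G.mult u v → k' < G.mult u' v' →
      (s(u, v) ≠ s(u', v') ∨ k ≠ k') →
      ∀ t t' : unitInterval, t ≠ 0 → t ≠ 1 → t' ≠ 0 → t' ≠ 1 →
        γ u v k t ≠ γ u' v' k' t')

lemma isPlanar_iff_planarIn (G : MG) : G.IsPlanar ↔ PlanarIn G (ℝ × ℝ) := Iff.rfl

lemma planarIn_of_homeomorph {X Y : Type*} [TopologicalSpace X] [TopologicalSpace Y]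
    (e : X ≃ₜ Y) {G : MG} (h : PlanarIn G X) : PlanarIn G Y := by
  obtain ⟨pos, γ, h1, h2, h3, h4, h5⟩ := h
  refine ⟨fun z => e (pos z),
    fun a b k => (⟨⇑e, e.continuous⟩ : C(X, Y)).comp (γ a b k), ?_, ?_, ?_, ?_, ?_⟩
  · exact e.injective.comp h1
  · intro a b k hk
    obtain ⟨e1, e2, e3⟩ := h2 a b k hk
    exact ⟨by simp [e1], by simp [e2], e.injective.comp e3⟩
  · intro a b k t
    simp [h3 a b k t]
  · intro a b k hk t ht0 ht1 z
    exact fun hh => h4 a b k hk t ht0 ht1 z (e.injective hh)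
  · intro a b k a' b' k' hk hk' hne t t' ht0 ht1 ht0' ht1'
    exact fun hh => h5 a b k a' b' k' hk hk' hne t t' ht0 ht1 ht0' ht1' (e.injective hh)

lemma sym2_eq_of_map {α β : Type*} {e : α → β} (he : Function.Injective e)
    {u v u' v' : α} (h : s(e u, e v) = s(e u', e v')) : s(u, v) = s(u', v') := by
  rw [Sym2.eq_iff] at h ⊢
  rcases h with ⟨h1, h2⟩ | ⟨h1, h2⟩
  · exact Or.inl ⟨he h1, he h2⟩
  · exact Or.inr ⟨he h1, he h2⟩

lemma planarIn_of_iso {G H : MG} (hiso : MG.Iso G H) {X : Type*} [TopologicalSpace X]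
    (h : PlanarIn H X) : PlanarIn G X := by
  obtain ⟨e, he⟩ := hiso
  obtain ⟨pos, γ, h1, h2, h3, h4, h5⟩ := h
  refine ⟨fun z => pos (e z), fun a b k => γ (e a) (e b) k, ?_, ?_, ?_, ?_, ?_⟩
  · exact h1.comp e.injective
  · intro a b k hk
    exact h2 (e a) (e b) k (by rw [he]; exact hk)
  · intro a b k t
    exact h3 (e a) (e b) k t
  · intro a b k hk t ht0 ht1 z
    exact h4 (e a) (e b) k (by rw [he]; exact hk) t ht0 ht1 (e z)
  · intro a b k a' b' k' hk hk' hne t t' ht0 ht1 ht0' ht1'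
    refine h5 (e a) (e b) k (e a') (e b') k' (by rw [he]; exact hk) (by rw [he]; exact hk')
      ?_ t t' ht0 ht1 ht0' ht1'
    rcases hne with hne | hne
    · exact Or.inl (fun hh => hne (sym2_eq_of_map e.injective hh))
    · exact Or.inr hne

lemma deltaYY_planar {G : MG} {u v w : G.V} (hd : G.IsDelta u v w)
    (hp : PlanarIn (G.deltaYY u v w) ℂ) : PlanarIn G ℂ := by
  classical
  obtain ⟨huv, huw, hvw, hauv, hauw, havw⟩ := hd
  obtain ⟨pos, γ, hposInj, hEnds, hSymm, hInt, hDisj⟩ := hp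
  haveI : Fintype G.V := G.fin
  -- multiplicity computations
  have hm_ss : ∀ a b : G.V, (G.deltaYY u v w).mult (some a) (some b)
      = G.mult a b - MG.triCount u v w a b := fun a b => rfl
  have hYne3 : v ≠ w := hvw
  -- the three external vertices, indexed
  set Y : Fin 3 → G.V := ![u, v, w] with hYdef
  have hY0 : Y 0 = u := rfl
  have hY1 : Y 1 = v := rfl
  have hY2 : Y 2 = w := rfl
  have hYmem : ∀ l : Fin 3, Y l = u ∨ Y l = v ∨ Y l = w := by
    intro l; fin_cases l
    · exact Or.inl rfl
    · exact Or.inr (Or.inl rfl)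
    · exact Or.inr (Or.inr rfl)
  have hYinj : Function.Injective Y := by
    intro l l' h
    fin_cases l <;> fin_cases l' <;>
      first
        | rfl
        | exact (huv h).elim | exact (huw h).elim | exact (hvw h).elim
        | exact (huv h.symm).elim | exact (huw h.symm).elim | exact (hvw h.symm).elim
  have hm2 : ∀ l : Fin 3, (G.deltaYY u v w).mult none (some (Y l)) = 2 := by
    intro l
    show (if Y l = u ∨ Y l = v ∨ Y l = w then 2 else 0) = 2
    rw [if_pos (hYmem l)]
  set c : ℂ := pos none with hcdef
  -- the six arcs incident to the new vertex
  set A : Fin 3 × Fin 2 → C(unitInterval, ℂ) :=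
    fun i => γ none (some (Y i.1)) i.2 with hAdef
  have hAk : ∀ i : Fin 3 × Fin 2, (i.2 : ℕ) < (G.deltaYY u v w).mult none (some (Y i.1)) := by
    intro i; rw [hm2]; exact i.2.2
  have hA0 : ∀ i, A i 0 = c := fun i => (hEnds _ _ _ (hAk i)).1
  have hA1 : ∀ i, A i 1 = pos (some (Y i.1)) := fun i => (hEnds _ _ _ (hAk i)).2.1
  have hAinj : ∀ i, Function.Injective ⇑(A i) := fun i => (hEnds _ _ _ (hAk i)).2.2
  -- interiors of arcs avoid all vertices
  have hArcVert : ∀ i (t : unitInterval), t ≠ 0 → t ≠ 1 → ∀ z : Option G.V,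
      A i t ≠ pos z := fun i t h0 h1 z => hInt none (some (Y i.1)) i.2 (hAk i) t h0 h1 z
  -- distinct arcs have disjoint interiors
  have hsymne : ∀ (i j : Fin 3 × Fin 2), i ≠ j →
      (s((none : Option G.V), some (Y i.1)) ≠ s((none : Option G.V), some (Y j.1))
        ∨ (i.2 : ℕ) ≠ (j.2 : ℕ)) := by
    intro i j hij
    by_cases h1 : i.1 = j.1
    · refine Or.inr ?_
      intro h2
      exact hij (Prod.ext h1 (Fin.val_injective h2))
    · refine Or.inl ?_
      intro h
      rw [Sym2.eq_iff] at h
      rcases h with ⟨-, h⟩ | ⟨h, -⟩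
      · exact h1 (hYinj (Option.some_injective _ h))
      · exact nomatch h
  have hArcArc : ∀ i j, i ≠ j → ∀ (t t' : unitInterval), t ≠ 0 → t ≠ 1 → t' ≠ 0 → t' ≠ 1 →
      A i t ≠ A j t' := by
    intro i j hij t t' h0 h1 h0' h1'
    exact hDisj none (some (Y i.1)) i.2 none (some (Y j.1)) j.2 (hAk i) (hAk j)
      (hsymne i j hij) t t' h0 h1 h0' h1'
  -- arcs vs old (vertex-vertex) edges
  have hArcOld : ∀ i a b k, k < (G.deltaYY u v w).mult (some a) (some b) →
      ∀ (t t' : unitInterval), t ≠ 0 → t ≠ 1 → t' ≠ 0 → t' ≠ 1 →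
      A i t ≠ γ (some a) (some b) k t' := by
    intro i a b k hk t t' h0 h1 h0' h1'
    refine hDisj none (some (Y i.1)) i.2 (some a) (some b) k (hAk i) hk (Or.inl ?_)
      t t' h0 h1 h0' h1'
    intro h
    replace h := Sym2.eq_iff.mp h
    rcases h with ⟨h, -⟩ | ⟨h, -⟩ <;> exact nomatch h
  -- choice of the radius ε
  set B : ℕ := (Finset.univ ×ˢ Finset.univ : Finset (G.V × G.V)).sup
    (fun pr => G.mult pr.1 pr.2) with hBdef
  set Jf : Finset (G.V × G.V × ℕ) :=
    (Finset.univ ×ˢ Finset.univ ×ˢ Finset.range (B + 1)).filter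
      (fun q => q.2.2 < (G.deltaYY u v w).mult (some q.1) (some q.2.1)) with hJfdef
  have hJf_mem : ∀ a b k, k < (G.deltaYY u v w).mult (some a) (some b) → (a, b, k) ∈ Jf := by
    intro a b k hk
    rw [hJfdef, Finset.mem_filter]
    refine ⟨?_, hk⟩
    rw [Finset.mem_product]
    refine ⟨Finset.mem_univ _, ?_⟩
    rw [Finset.mem_product]
    refine ⟨Finset.mem_univ _, Finset.mem_range.mpr ?_⟩
    show k < B + 1
    have h1 : (G.deltaYY u v w).mult (some a) (some b) ≤ G.mult a b := by
      rw [hm_ss]; exact Nat.sub_le _ _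
    have h2 : G.mult a b ≤ B := by
      rw [hBdef]
      exact Finset.le_sup (f := fun pr : G.V × G.V => G.mult pr.1 pr.2) (b := (a, b))
        (Finset.mem_product.mpr ⟨Finset.mem_univ a, Finset.mem_univ b⟩)
    omega
  have hc_notmem : ∀ a b k, k < (G.deltaYY u v w).mult (some a) (some b) →
      c ∉ Set.range ⇑(γ (some a) (some b) k) := by
    intro a b k hk hcmem
    obtain ⟨t, ht⟩ := hcmem
    by_cases h0 : t = 0
    · subst h0
      rw [(hEnds _ _ _ hk).1] at ht
      exact nomatch hposInj ht
    · by_cases h1 : t = 1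
      · subst h1
        rw [(hEnds _ _ _ hk).2.1] at ht
        exact nomatch hposInj ht
      · exact hInt (some a) (some b) k hk t h0 h1 none ht
  set dfn : G.V × G.V × ℕ → ℝ :=
    fun q => Metric.infDist c (Set.range ⇑(γ (some q.1) (some q.2.1) q.2.2)) with hdfndef
  set allD : Finset ℝ := Jf.image dfn ∪ Finset.univ.image (fun z : G.V => dist c (pos (some z)))
    with hallDdef
  have hallDne : allD.Nonempty := by
    refine ⟨dist c (pos (some u)), ?_⟩
    rw [hallDdef, Finset.mem_union]
    exact Or.inr (Finset.mem_image.mpr ⟨u, Finset.mem_univ u, rfl⟩)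
  have hallDpos : ∀ x ∈ allD, 0 < x := by
    intro x hx
    rw [hallDdef, Finset.mem_union] at hx
    rcases hx with hx | hx
    · obtain ⟨q, hq, rfl⟩ := Finset.mem_image.mp hx
      rw [hJfdef, Finset.mem_filter] at hq
      have hcomp : IsCompact (Set.range ⇑(γ (some q.1) (some q.2.1) q.2.2)) :=
        isCompact_range (γ _ _ _).continuous
      obtain ⟨y, hy, hyd⟩ := hcomp.exists_infDist_eq_dist ⟨_, ⟨0, rfl⟩⟩ c
      rw [hdfndef]
      simp only
      rw [hyd]
      rw [dist_pos]
      intro h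
      exact hc_notmem q.1 q.2.1 q.2.2 hq.2 (h ▸ hy)
    · obtain ⟨z, _, rfl⟩ := Finset.mem_image.mp hx
      rw [dist_pos]
      intro h
      exact nomatch hposInj h
  set ε : ℝ := allD.min' hallDne / 2 with hεdef
  have hε : 0 < ε := by
    rw [hεdef]
    have := hallDpos _ (allD.min'_mem hallDne)
    linarith
  have hεv : ∀ z : G.V, 2 * ε ≤ dist c (pos (some z)) := by
    intro z
    have hmem : dist c (pos (some z)) ∈ allD := by
      rw [hallDdef, Finset.mem_union]
      exact Or.inr (Finset.mem_image.mpr ⟨z, Finset.mem_univ z, rfl⟩)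
    have := allD.min'_le _ hmem
    rw [hεdef]; linarith
  have hεa : ∀ a b k, k < (G.deltaYY u v w).mult (some a) (some b) →
      ∀ t : unitInterval, 2 * ε ≤ dist c (γ (some a) (some b) k t) := by
    intro a b k hk t
    have hmem : dfn (a, b, k) ∈ allD := by
      rw [hallDdef, Finset.mem_union]
      exact Or.inl (Finset.mem_image.mpr ⟨(a, b, k), hJf_mem a b k hk, rfl⟩)
    have h1 := allD.min'_le _ hmem
    have h2 : dfn (a, b, k) ≤ dist c (γ (some a) (some b) k t) :=
      Metric.infDist_le_dist_of_mem ⟨t, rfl⟩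
    rw [hεdef]; linarith
  -- exit times
  have hexit : ∀ i : Fin 3 × Fin 2, ∃ s : unitInterval, 0 < s.1 ∧ s.1 < 1 ∧
      dist (A i s) c = ε ∧ ∀ t : unitInterval, s.1 < t.1 → ε < dist (A i t) c := by
    intro i
    refine last_exit (A i) c (hA0 i) hε ?_
    rw [hA1 i, dist_comm]
    have := hεv (Y i.1)
    linarith
  choose sfn hsf0 hsf1 hsfd hsfgt using hexit
  set p : Fin 3 × Fin 2 → ℂ := fun i => A i (sfn i) with hpdef
  set θ : Fin 3 × Fin 2 → ℝ := fun i => (p i - c).arg with hθdef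
  have hsne0 : ∀ i, sfn i ≠ 0 := by
    intro i h
    have := hsf0 i
    rw [h] at this
    simp at this
  have hsne1 : ∀ i, sfn i ≠ 1 := by
    intro i h
    have := hsf1 i
    rw [h] at this
    simp at this
  have hpc : ∀ i, dist (p i) c = ε := hsfd
  have habs : ∀ i, ‖p i - c‖ = ε := by
    intro i
    rw [← Complex.dist_eq]
    exact hpc i
  have hpne : ∀ i j, i ≠ j → p i ≠ p j := by
    intro i j hij
    exact hArcArc i j hij (sfn i) (sfn j) (hsne0 i) (hsne1 i) (hsne0 j) (hsne1 j)
  -- non-crossing matching of the six exit points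
  obtain ⟨m1, m2, m3, m4, m5, m6, hm13, hm25, hm46, hNCa, hNCb, hNCc⟩ := matching θ
  -- kept (truncated) parts of the arcs
  set T : (i : Fin 3 × Fin 2) → Path (p i) (pos (some (Y i.1))) := fun i =>
    { toFun := fun t => A i (cutFn (sfn i) t)
      continuous_toFun := (A i).continuous.comp (continuous_cutFn (sfn i))
      source' := by show A i (cutFn (sfn i) 0) = p i; rw [cutFn_zero]
      target' := by
        show A i (cutFn (sfn i) 1) = pos (some (Y i.1))
        rw [cutFn_one]; exact hA1 i } with hTdef
  have hTapp : ∀ i t, T i t = A i (cutFn (sfn i) t) := fun i t => rfl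
  have hT0 : ∀ i, T i 0 = p i := fun i => (T i).source
  have hT1 : ∀ i, T i 1 = pos (some (Y i.1)) := fun i => (T i).target
  have hTinj : ∀ i, Function.Injective ⇑(T i) := by
    intro i t t' h
    exact cutFn_injective (sfn i) (hsf1 i) (hAinj i h)
  have hTfar : ∀ i (t : unitInterval), t ≠ 0 → ε < dist (T i t) c := by
    intro i t ht
    rw [hTapp]
    exact hsfgt i _ (cutFn_lt (sfn i) (hsf1 i) ht)
  have hTint : ∀ i (t : unitInterval), t ≠ 1 →
      ∃ t2 : unitInterval, t2 ≠ 0 ∧ t2 ≠ 1 ∧ T i t = A i t2 := by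
    intro i t ht
    refine ⟨cutFn (sfn i) t, ?_, ?_, rfl⟩
    · intro h
      have h0 := le_cutFn (sfn i) t
      rw [h] at h0
      have h1 := hsf0 i
      have h2 : ((0 : unitInterval) : ℝ) = 0 := rfl
      rw [h2] at h0
      linarith
    · intro h
      have h0 := cutFn_lt_one (sfn i) (hsf1 i) ht
      rw [h] at h0
      have h2 : ((1 : unitInterval) : ℝ) = 1 := rfl
      rw [h2] at h0
      linarith
  -- kept parts of distinct arcs meet only possibly at endpoints
  have hKmKm : ∀ i j, i ≠ j → ∀ (t t' : unitInterval),
      T i t ≠ pos (some (Y i.1)) → T j t' ≠ pos (some (Y j.1)) → T i t ≠ T j t' := by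
    intro i j hij t t' hti htj
    have ht1 : t ≠ 1 := fun h => hti (h ▸ hT1 i)
    have ht1' : t' ≠ 1 := fun h => htj (h ▸ hT1 j)
    obtain ⟨t2, h20, h21, he⟩ := hTint i t ht1
    obtain ⟨t2', h20', h21', he'⟩ := hTint j t' ht1'
    rw [he, he']
    exact hArcArc i j hij t2 t2' h20 h21 h20' h21'
  -- segment bounds
  have hseg : ∀ i j, i ≠ j → ∀ z ∈ segment ℝ (p i) (p j),
      dist z c ≤ ε ∧ (z ≠ p i → z ≠ p j → dist z c < ε) :=
    fun i j hij => seg_in_ball hε (le_of_eq (hpc i)) (le_of_eq (hpc j)) (hpne i j hij)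
  -- kept part vs its own chord
  have hKsegOwn : ∀ i j, i ≠ j → ∀ (t : unitInterval) (z : ℂ), z ∈ segment ℝ (p i) (p j) →
      T i t = z → T i t = p i := by
    intro i j hij t z hz he
    by_cases ht : t = 0
    · rw [ht, hT0]
    · exfalso
      have h1 := hTfar i t ht
      have h2 := (hseg i j hij z hz).1
      rw [he] at h1
      linarith
  -- kept part vs other chords
  have hKsegO : ∀ i i' j', i ≠ i' → i ≠ j' → i' ≠ j' → ∀ (t : unitInterval) (z : ℂ),
      z ∈ segment ℝ (p i') (p j') → T i t ≠ z := by
    intro i i' j' hii hij hij' t z hz he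
    by_cases ht : t = 0
    · rw [ht, hT0 i] at he
      have h2 := (hseg i' j' hij' z hz).2 (by rw [← he]; exact (hpne i i' hii).symm.symm)
        (by rw [← he]; exact hpne i j' hij)
      rw [← he, hpc i] at h2
      exact lt_irrefl _ h2
    · have h1 := hTfar i t ht
      have h2 := (hseg i' j' hij' z hz).1
      rw [he] at h1
      linarith
  -- disjointness of the chosen chords
  have hchordsD : ∀ X1 X2 X3 X4 : Fin 3 × Fin 2, X1 ≠ X2 → X3 ≠ X4 → X3 ≠ X1 → X3 ≠ X2 →
      X4 ≠ X1 → X4 ≠ X2 → NCross θ X1 X2 X3 X4 →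
      ∀ z ∈ segment ℝ (p X1) (p X2), ∀ z' ∈ segment ℝ (p X3) (p X4), z ≠ z' := by
    intro X1 X2 X3 X4 h12 h34 h31 h32 h41 h42 hNC
    rcases hNC with h | h
    · exact chords_disjoint hε (habs X1) (habs X2) (habs X3) (habs X4) (hpne _ _ h12)
        (hpne _ _ h31) (hpne _ _ h32) (hpne _ _ h41) (hpne _ _ h42) h
    · intro z hz z' hz' he
      exact chords_disjoint hε (habs X3) (habs X4) (habs X1) (habs X2) (hpne _ _ h34)
        (hpne _ _ (Ne.symm h31)) (hpne _ _ (Ne.symm h41)) (hpne _ _ (Ne.symm h32))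
        (hpne _ _ (Ne.symm h42)) h z' hz' z hz he.symm
  -- the "new-edge" point sets
  set NSet : Fin 3 × Fin 2 → Fin 3 × Fin 2 → Set ℂ := fun i j =>
    {z | (∃ t, T i t = z ∧ z ≠ pos (some (Y i.1))) ∨ z ∈ segment ℝ (p i) (p j) ∨
      (∃ t, T j t = z ∧ z ≠ pos (some (Y j.1)))} with hNSetdef
  -- the new paths
  set NP : (i j : Fin 3 × Fin 2) → Path (pos (some (Y i.1))) (pos (some (Y j.1))) :=
    fun i j => ((T i).symm.trans (segPath (p i) (p j))).trans (T j) with hNPdef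
  have hTsymm_inj : ∀ i, Function.Injective ⇑(T i).symm := by
    intro i t t' h
    rw [Path.symm_apply, Path.symm_apply] at h
    exact unitInterval.symm_involutive.injective (hTinj i h)
  have hNPinj : ∀ i j, i ≠ j → Y i.1 ≠ Y j.1 → Function.Injective ⇑(NP i j) := by
    intro i j hij hYij
    refine path_trans_injective _ _ ?_ (hTinj j) ?_
    · refine path_trans_injective _ _ (hTsymm_inj i) (segPath_injective (hpne i j hij)) ?_
      rintro z ⟨⟨t, ht⟩, ⟨t', ht'⟩⟩
      rw [Path.symm_apply] at ht
      have hz : z ∈ segment ℝ (p i) (p j) := ht' ▸ segPath_mem (p i) (p j) t'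
      exact Set.mem_singleton_iff.mpr
        (ht.symm.trans (hKsegOwn i j hij (unitInterval.symm t) z hz ht))
    · rintro z ⟨hz1, ⟨t', ht'⟩⟩
      rw [Path.trans_range] at hz1
      rcases hz1 with hz1 | hz1
      · rw [Path.symm_range] at hz1
        obtain ⟨t, ht⟩ := hz1
        exfalso
        by_cases h1 : T i t = pos (some (Y i.1))
        · by_cases h2 : T j t' = pos (some (Y j.1))
          · have : pos (some (Y i.1)) = pos (some (Y j.1)) := by
              rw [← h1, ← h2, ht, ht']
            exact hYij (Option.some_injective _ (hposInj this))
          · have ht1' : t' ≠ 1 := fun h => h2 (h ▸ hT1 j)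
            obtain ⟨t2, h20, h21, he⟩ := hTint j t' ht1'
            exact hArcVert j t2 h20 h21 (some (Y i.1)) (by rw [← he, ht', ← ht, h1])
        · by_cases h2 : T j t' = pos (some (Y j.1))
          · have ht1 : t ≠ 1 := fun h => h1 (h ▸ hT1 i)
            obtain ⟨t2, h20, h21, he⟩ := hTint i t ht1
            exact hArcVert i t2 h20 h21 (some (Y j.1)) (by rw [← he, ht, ← ht', h2])
          · exact hKmKm i j hij t t' h1 h2 (ht.trans ht'.symm)
      · obtain ⟨t, ht⟩ := hz1
        have hz : z ∈ segment ℝ (p j) (p i) := by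
          rw [segment_symm]
          exact ht ▸ segPath_mem (p i) (p j) t
        exact Set.mem_singleton_iff.mpr
          (ht'.symm.trans (hKsegOwn j i (Ne.symm hij) t' z hz ht'))
  have hNPmem : ∀ i j, i ≠ j → Y i.1 ≠ Y j.1 → ∀ t : unitInterval, t ≠ 0 → t ≠ 1 →
      NP i j t ∈ NSet i j := by
    intro i j hij hYij t h0 h1
    have hz : NP i j t ∈ Set.range ⇑(NP i j) := ⟨t, rfl⟩
    rw [Path.trans_range, Path.trans_range, Path.symm_range] at hz
    rcases hz with (hz | hz) | hz
    · obtain ⟨t2, ht2⟩ := hz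
      by_cases hv : NP i j t = pos (some (Y i.1))
      · exfalso
        have : NP i j t = NP i j 0 := by rw [hv, Path.source]
        exact h0 (hNPinj i j hij hYij this)
      · exact Or.inl ⟨t2, ht2, hv⟩
    · obtain ⟨t2, ht2⟩ := hz
      exact Or.inr (Or.inl (ht2 ▸ segPath_mem (p i) (p j) t2))
    · obtain ⟨t2, ht2⟩ := hz
      by_cases hv : NP i j t = pos (some (Y j.1))
      · exfalso
        have : NP i j t = NP i j 1 := by rw [hv, Path.target]
        exact h1 (hNPinj i j hij hYij this)
      · exact Or.inr (Or.inr ⟨t2, ht2, hv⟩)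
  -- new-edge sets avoid old edges
  have hNO : ∀ i j, i ≠ j → ∀ z ∈ NSet i j, ∀ a b k,
      k < (G.deltaYY u v w).mult (some a) (some b) →
      ∀ t' : unitInterval, t' ≠ 0 → t' ≠ 1 → z ≠ γ (some a) (some b) k t' := by
    intro i j hij z hz a b k hk t' h0' h1'
    have hKcase : ∀ i2 (t : unitInterval), T i2 t = z → z ≠ pos (some (Y i2.1)) →
        z ≠ γ (some a) (some b) k t' := by
      intro i2 t ht hv
      have ht1 : t ≠ 1 := fun h => hv (by rw [← ht, h, hT1])
      obtain ⟨t2, h20, h21, he⟩ := hTint i2 t ht1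
      rw [← ht, he]
      exact hArcOld i2 a b k hk t2 t' h20 h21 h0' h1'
    rcases hz with ⟨t, ht, hv⟩ | hzs | ⟨t, ht, hv⟩
    · exact hKcase i t ht hv
    · intro he
      have h1 := (hseg i j hij z hzs).1
      have h2 := hεa a b k hk t'
      rw [he, dist_comm] at h1
      linarith
    · exact hKcase j t ht hv
  -- new-edge sets avoid vertices
  have hNV : ∀ i j, i ≠ j → ∀ z ∈ NSet i j, ∀ y : G.V, z ≠ pos (some y) := by
    intro i j hij z hz y
    have hKcase : ∀ i2 (t : unitInterval), T i2 t = z → z ≠ pos (some (Y i2.1)) →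
        z ≠ pos (some y) := by
      intro i2 t ht hv
      have ht1 : t ≠ 1 := fun h => hv (by rw [← ht, h, hT1])
      obtain ⟨t2, h20, h21, he⟩ := hTint i2 t ht1
      rw [← ht, he]
      exact hArcVert i2 t2 h20 h21 (some y)
    rcases hz with ⟨t, ht, hv⟩ | hzs | ⟨t, ht, hv⟩
    · exact hKcase i t ht hv
    · intro he
      have h1 := (hseg i j hij z hzs).1
      have h2 := hεv y
      rw [he, dist_comm] at h1
      linarith
    · exact hKcase j t ht hv
  -- two different new-edge sets are disjoint
  have hNSetD : ∀ i j i' j', i ≠ j → i' ≠ j' → i' ≠ i → i' ≠ j → j' ≠ i → j' ≠ j →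
      NCross θ i j i' j' → ∀ z ∈ NSet i j, ∀ z' ∈ NSet i' j', z ≠ z' := by
    intro i j i' j' hij hij' hi'i hi'j hj'i hj'j hNC z hz z' hz'
    have hKK : ∀ i2 j2 (t t' : unitInterval), i2 ≠ j2 → T i2 t = z → z ≠ pos (some (Y i2.1)) →
        T j2 t' = z' → z' ≠ pos (some (Y j2.1)) → z ≠ z' := by
      intro i2 j2 t t' h12 ht hv ht' hv' he
      exact hKmKm i2 j2 h12 t t' (by rw [ht]; exact hv) (by rw [ht']; exact hv')
        (by rw [ht, ht']; exact he)
    have hKS : ∀ i2 a2 b2, i2 ≠ a2 → i2 ≠ b2 → a2 ≠ b2 → ∀ (t : unitInterval) (w1 w2 : ℂ),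
        T i2 t = w1 → w2 ∈ segment ℝ (p a2) (p b2) → w1 ≠ w2 := by
      intro i2 a2 b2 h1 h2 h3 t w1 w2 ht hw2 he
      exact hKsegO i2 a2 b2 h1 h2 h3 t w2 hw2 (by rw [ht]; exact he)
    rcases hz with ⟨t, ht, hv⟩ | hzs | ⟨t, ht, hv⟩ <;>
      rcases hz' with ⟨t', ht', hv'⟩ | hzs' | ⟨t', ht', hv'⟩
    · exact hKK i i' t t' (Ne.symm hi'i) ht hv ht' hv'
    · exact hKS i i' j' (Ne.symm hi'i) (Ne.symm hj'i) hij' t z z' ht hzs'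
    · exact hKK i j' t t' (Ne.symm hj'i) ht hv ht' hv'
    · intro he
      exact hKS i' i j hi'i hi'j hij t' z' z ht' hzs he.symm
    · exact hchordsD i j i' j' hij hij' hi'i hi'j hj'i hj'j hNC z hzs z' hzs'
    · intro he
      exact hKS j' i j hj'i hj'j hij t' z' z ht' hzs he.symm
    · exact hKK j i' t t' (Ne.symm hi'j) ht hv ht' hv'
    · exact hKS j i' j' (Ne.symm hi'j) (Ne.symm hj'j) hij' t z z' ht hzs'
    · exact hKK j j' t t' (Ne.symm hj'j) ht hv ht' hv'
  have hsymmne0 : ∀ t : unitInterval, t ≠ 1 → unitInterval.symm t ≠ 0 :=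
    fun t h hh => h (unitInterval.symm_eq_zero.mp hh)
  have hsymmne1 : ∀ t : unitInterval, t ≠ 0 → unitInterval.symm t ≠ 1 :=
    fun t h hh => h (unitInterval.symm_eq_one.mp hh)
  have hfne : ∀ (x y : Fin 3) (a2 b2 : Fin 2), x ≠ y → (x, a2) ≠ (y, b2) :=
    fun x y a2 b2 h hh => h (congrArg Prod.fst hh)
  have hsne2 : ∀ (x : Fin 3) (a2 b2 : Fin 2), a2 ≠ b2 → (x, a2) ≠ (x, b2) :=
    fun x a2 b2 h hh => h (congrArg Prod.snd hh)
  -- the drawing of G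
  set γG : G.V → G.V → ℕ → C(unitInterval, ℂ) := fun a b k =>
    if a = u ∧ b = v ∧ k = G.mult u v - 1 then
      (NP ((0 : Fin 3), m1) ((1 : Fin 3), m2)).toContinuousMap
    else if a = v ∧ b = u ∧ k = G.mult u v - 1 then
      (NP ((0 : Fin 3), m1) ((1 : Fin 3), m2)).symm.toContinuousMap
    else if a = u ∧ b = w ∧ k = G.mult u w - 1 then
      (NP ((0 : Fin 3), m3) ((2 : Fin 3), m4)).toContinuousMap
    else if a = w ∧ b = u ∧ k = G.mult u w - 1 then
      (NP ((0 : Fin 3), m3) ((2 : Fin 3), m4)).symm.toContinuousMap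
    else if a = v ∧ b = w ∧ k = G.mult v w - 1 then
      (NP ((1 : Fin 3), m5) ((2 : Fin 3), m6)).toContinuousMap
    else if a = w ∧ b = v ∧ k = G.mult v w - 1 then
      (NP ((1 : Fin 3), m5) ((2 : Fin 3), m6)).symm.toContinuousMap
    else γ (some a) (some b) k with hγGdef
  have g1 : ∀ k, k = G.mult u v - 1 →
      γG u v k = (NP ((0 : Fin 3), m1) ((1 : Fin 3), m2)).toContinuousMap := by
    intro k hkk
    simp only [hγGdef]
    rw [if_pos ⟨by trivial, by trivial, hkk⟩]
  have g2 : ∀ k, k = G.mult u v - 1 →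
      γG v u k = (NP ((0 : Fin 3), m1) ((1 : Fin 3), m2)).symm.toContinuousMap := by
    intro k hkk
    simp only [hγGdef]
    rw [if_neg (by rintro ⟨h, -⟩; exact huv h.symm), if_pos ⟨by trivial, by trivial, hkk⟩]
  have g3 : ∀ k, k = G.mult u w - 1 →
      γG u w k = (NP ((0 : Fin 3), m3) ((2 : Fin 3), m4)).toContinuousMap := by
    intro k hkk
    simp only [hγGdef]
    rw [if_neg (by rintro ⟨-, h, -⟩; exact hvw h.symm),
      if_neg (by rintro ⟨h, -⟩; exact huv h), if_pos ⟨by trivial, by trivial, hkk⟩]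
  have g4 : ∀ k, k = G.mult u w - 1 →
      γG w u k = (NP ((0 : Fin 3), m3) ((2 : Fin 3), m4)).symm.toContinuousMap := by
    intro k hkk
    simp only [hγGdef]
    rw [if_neg (by rintro ⟨h, -⟩; exact huw h.symm),
      if_neg (by rintro ⟨h, -⟩; exact hvw h.symm),
      if_neg (by rintro ⟨h, -⟩; exact huw h.symm), if_pos ⟨by trivial, by trivial, hkk⟩]
  have g5 : ∀ k, k = G.mult v w - 1 →
      γG v w k = (NP ((1 : Fin 3), m5) ((2 : Fin 3), m6)).toContinuousMap := by
    intro k hkk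
    simp only [hγGdef]
    rw [if_neg (by rintro ⟨h, -⟩; exact huv h.symm),
      if_neg (by rintro ⟨-, h, -⟩; exact huw h.symm),
      if_neg (by rintro ⟨h, -⟩; exact huv h.symm),
      if_neg (by rintro ⟨h, -⟩; exact hvw h), if_pos ⟨by trivial, by trivial, hkk⟩]
  have g6 : ∀ k, k = G.mult v w - 1 →
      γG w v k = (NP ((1 : Fin 3), m5) ((2 : Fin 3), m6)).symm.toContinuousMap := by
    intro k hkk
    simp only [hγGdef]
    rw [if_neg (by rintro ⟨h, -⟩; exact huw h.symm),
      if_neg (by rintro ⟨h, -⟩; exact hvw h.symm),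
      if_neg (by rintro ⟨h, -⟩; exact huw h.symm),
      if_neg (by rintro ⟨-, h, -⟩; exact huv h.symm),
      if_neg (by rintro ⟨h, -⟩; exact hvw h.symm), if_pos ⟨by trivial, by trivial, hkk⟩]
  have g7 : ∀ a b k, ¬(a = u ∧ b = v ∧ k = G.mult u v - 1) →
      ¬(a = v ∧ b = u ∧ k = G.mult u v - 1) → ¬(a = u ∧ b = w ∧ k = G.mult u w - 1) →
      ¬(a = w ∧ b = u ∧ k = G.mult u w - 1) → ¬(a = v ∧ b = w ∧ k = G.mult v w - 1) →
      ¬(a = w ∧ b = v ∧ k = G.mult v w - 1) → γG a b k = γ (some a) (some b) k := by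
    intro a b k h1 h2 h3 h4 h5 h6
    simp only [hγGdef]
    rw [if_neg h1, if_neg h2, if_neg h3, if_neg h4, if_neg h5, if_neg h6]
  -- fallback multiplicity bound
  have hfall : ∀ a b k, k < G.mult a b → ¬(a = u ∧ b = v ∧ k = G.mult u v - 1) →
      ¬(a = v ∧ b = u ∧ k = G.mult u v - 1) → ¬(a = u ∧ b = w ∧ k = G.mult u w - 1) →
      ¬(a = w ∧ b = u ∧ k = G.mult u w - 1) → ¬(a = v ∧ b = w ∧ k = G.mult v w - 1) →
      ¬(a = w ∧ b = v ∧ k = G.mult v w - 1) →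
      k < (G.deltaYY u v w).mult (some a) (some b) := by
    intro a b k hk h1 h2 h3 h4 h5 h6
    rw [hm_ss]
    unfold MG.triCount
    by_cases hm : s(a, b) ∈ ({s(u, v), s(u, w), s(v, w)} : Set (Sym2 G.V))
    · rw [if_pos hm]
      simp only [Set.mem_insert_iff, Set.mem_singleton_iff] at hm
      rcases hm with hm | hm | hm <;> rw [Sym2.eq_iff] at hm <;>
        rcases hm with ⟨ha, hb⟩ | ⟨ha, hb⟩
      · have hne' : k ≠ G.mult u v - 1 := fun h => h1 ⟨ha, hb, h⟩
        rw [ha, hb] at hk ⊢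
        omega
      · have hne' : k ≠ G.mult u v - 1 := fun h => h2 ⟨ha, hb, h⟩
        rw [ha, hb] at hk ⊢
        rw [G.symm v u] at hk ⊢
        omega
      · have hne' : k ≠ G.mult u w - 1 := fun h => h3 ⟨ha, hb, h⟩
        rw [ha, hb] at hk ⊢
        omega
      · have hne' : k ≠ G.mult u w - 1 := fun h => h4 ⟨ha, hb, h⟩
        rw [ha, hb] at hk ⊢
        rw [G.symm w u] at hk ⊢
        omega
      · have hne' : k ≠ G.mult v w - 1 := fun h => h5 ⟨ha, hb, h⟩
        rw [ha, hb] at hk ⊢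
        omega
      · have hne' : k ≠ G.mult v w - 1 := fun h => h6 ⟨ha, hb, h⟩
        rw [ha, hb] at hk ⊢
        rw [G.symm w v] at hk ⊢
        omega
    · rw [if_neg hm]
      omega
  have hNPsymmInj : ∀ i j, i ≠ j → Y i.1 ≠ Y j.1 →
      Function.Injective ⇑(NP i j).symm := by
    intro i j hij hYij t t' h
    rw [Path.symm_apply, Path.symm_apply] at h
    exact unitInterval.symm_involutive.injective (hNPinj i j hij hYij h)
  set PR1 : Fin 3 → G.V := ![u, u, v] with hPR1def
  set PR2 : Fin 3 → G.V := ![v, w, w] with hPR2def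
  set E1 : Fin 3 → Fin 3 × Fin 2 := ![((0 : Fin 3), m1), ((0 : Fin 3), m3), ((1 : Fin 3), m5)]
    with hE1def
  set E2 : Fin 3 → Fin 3 × Fin 2 := ![((1 : Fin 3), m2), ((2 : Fin 3), m4), ((2 : Fin 3), m6)]
    with hE2def
  have hEne : ∀ q : Fin 3, E1 q ≠ E2 q := by
    intro q
    fin_cases q <;> exact hfne _ _ _ _ (by decide)
  -- classification of the edges of the new drawing
  have hclass : ∀ a b k, k < G.mult a b → ∀ (t : unitInterval), t ≠ 0 → t ≠ 1 →
      (∃ q : Fin 3, s(a, b) = s(PR1 q, PR2 q) ∧ k = G.mult (PR1 q) (PR2 q) - 1 ∧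
        γG a b k t ∈ NSet (E1 q) (E2 q)) ∨
      (k < (G.deltaYY u v w).mult (some a) (some b) ∧
        γG a b k t = γ (some a) (some b) k t) := by
    intro a b k hk t ht0 ht1
    by_cases h1 : a = u ∧ b = v ∧ k = G.mult u v - 1
    · obtain ⟨ha, hb, hkk⟩ := h1
      refine Or.inl ⟨0, by rw [ha, hb]; rfl, by rw [hkk]; rfl, ?_⟩
      rw [ha, hb, g1 k hkk]
      simp only [Path.coe_toContinuousMap]
      exact hNPmem ((0 : Fin 3), m1) ((1 : Fin 3), m2) (hfne _ _ _ _ (by decide)) huv t ht0 ht1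
    · by_cases h2 : a = v ∧ b = u ∧ k = G.mult u v - 1
      · obtain ⟨ha, hb, hkk⟩ := h2
        refine Or.inl ⟨0, by rw [ha, hb]; exact Sym2.eq_swap, by rw [hkk]; rfl, ?_⟩
        rw [ha, hb, g2 k hkk]
        simp only [Path.coe_toContinuousMap, Path.symm_apply, Function.comp_apply]
        exact hNPmem ((0 : Fin 3), m1) ((1 : Fin 3), m2) (hfne _ _ _ _ (by decide)) huv (unitInterval.symm t)
          (hsymmne0 t ht1) (hsymmne1 t ht0)
      · by_cases h3 : a = u ∧ b = w ∧ k = G.mult u w - 1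
        · obtain ⟨ha, hb, hkk⟩ := h3
          refine Or.inl ⟨1, by rw [ha, hb]; rfl, by rw [hkk]; rfl, ?_⟩
          rw [ha, hb, g3 k hkk]
          simp only [Path.coe_toContinuousMap]
          exact hNPmem ((0 : Fin 3), m3) ((2 : Fin 3), m4) (hfne _ _ _ _ (by decide)) huw t ht0 ht1
        · by_cases h4 : a = w ∧ b = u ∧ k = G.mult u w - 1
          · obtain ⟨ha, hb, hkk⟩ := h4
            refine Or.inl ⟨1, by rw [ha, hb]; exact Sym2.eq_swap, by rw [hkk]; rfl, ?_⟩
            rw [ha, hb, g4 k hkk]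
            simp only [Path.coe_toContinuousMap, Path.symm_apply, Function.comp_apply]
            exact hNPmem ((0 : Fin 3), m3) ((2 : Fin 3), m4) (hfne _ _ _ _ (by decide)) huw (unitInterval.symm t)
              (hsymmne0 t ht1) (hsymmne1 t ht0)
          · by_cases h5 : a = v ∧ b = w ∧ k = G.mult v w - 1
            · obtain ⟨ha, hb, hkk⟩ := h5
              refine Or.inl ⟨2, by rw [ha, hb]; rfl, by rw [hkk]; rfl, ?_⟩
              rw [ha, hb, g5 k hkk]
              simp only [Path.coe_toContinuousMap]
              exact hNPmem ((1 : Fin 3), m5) ((2 : Fin 3), m6) (hfne _ _ _ _ (by decide)) hvw t ht0 ht1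
            · by_cases h6 : a = w ∧ b = v ∧ k = G.mult v w - 1
              · obtain ⟨ha, hb, hkk⟩ := h6
                refine Or.inl ⟨2, by rw [ha, hb]; exact Sym2.eq_swap, by rw [hkk]; rfl, ?_⟩
                rw [ha, hb, g6 k hkk]
                simp only [Path.coe_toContinuousMap, Path.symm_apply, Function.comp_apply]
                exact hNPmem ((1 : Fin 3), m5) ((2 : Fin 3), m6) (hfne _ _ _ _ (by decide)) hvw (unitInterval.symm t)
                  (hsymmne0 t ht1) (hsymmne1 t ht0)
              · exact Or.inr ⟨hfall a b k hk h1 h2 h3 h4 h5 h6,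
                  by rw [g7 a b k h1 h2 h3 h4 h5 h6]⟩
  -- pairwise disjointness of the three new-edge sets
  have hNNall : ∀ q q' : Fin 3, q ≠ q' → ∀ z ∈ NSet (E1 q) (E2 q),
      ∀ z' ∈ NSet (E1 q') (E2 q'), z ≠ z' := by
    intro q q' hqq
    fin_cases q <;> fin_cases q'
    · exact absurd rfl hqq
    · exact hNSetD ((0 : Fin 3), m1) ((1 : Fin 3), m2) ((0 : Fin 3), m3) ((2 : Fin 3), m4)
        (hfne _ _ _ _ (by decide)) (hfne _ _ _ _ (by decide)) (hsne2 _ _ _ (Ne.symm hm13))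
        (hfne _ _ _ _ (by decide)) (hfne _ _ _ _ (by decide)) (hfne _ _ _ _ (by decide)) hNCa
    · exact hNSetD ((0 : Fin 3), m1) ((1 : Fin 3), m2) ((1 : Fin 3), m5) ((2 : Fin 3), m6)
        (hfne _ _ _ _ (by decide)) (hfne _ _ _ _ (by decide)) (hfne _ _ _ _ (by decide))
        (hsne2 _ _ _ (Ne.symm hm25)) (hfne _ _ _ _ (by decide)) (hfne _ _ _ _ (by decide)) hNCb
    · exact hNSetD ((0 : Fin 3), m3) ((2 : Fin 3), m4) ((0 : Fin 3), m1) ((1 : Fin 3), m2)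
        (hfne _ _ _ _ (by decide)) (hfne _ _ _ _ (by decide)) (hsne2 _ _ _ hm13)
        (hfne _ _ _ _ (by decide)) (hfne _ _ _ _ (by decide)) (hfne _ _ _ _ (by decide)) hNCa.sym
    · exact absurd rfl hqq
    · exact hNSetD ((0 : Fin 3), m3) ((2 : Fin 3), m4) ((1 : Fin 3), m5) ((2 : Fin 3), m6)
        (hfne _ _ _ _ (by decide)) (hfne _ _ _ _ (by decide)) (hfne _ _ _ _ (by decide))
        (hfne _ _ _ _ (by decide)) (hfne _ _ _ _ (by decide)) (hsne2 _ _ _ (Ne.symm hm46)) hNCc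
    · exact hNSetD ((1 : Fin 3), m5) ((2 : Fin 3), m6) ((0 : Fin 3), m1) ((1 : Fin 3), m2)
        (hfne _ _ _ _ (by decide)) (hfne _ _ _ _ (by decide)) (hfne _ _ _ _ (by decide))
        (hfne _ _ _ _ (by decide)) (hsne2 _ _ _ hm25) (hfne _ _ _ _ (by decide)) hNCb.sym
    · exact hNSetD ((1 : Fin 3), m5) ((2 : Fin 3), m6) ((0 : Fin 3), m3) ((2 : Fin 3), m4)
        (hfne _ _ _ _ (by decide)) (hfne _ _ _ _ (by decide)) (hfne _ _ _ _ (by decide))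
        (hfne _ _ _ _ (by decide)) (hfne _ _ _ _ (by decide)) (hsne2 _ _ _ hm46) hNCc.sym
    · exact absurd rfl hqq
  -- assemble the drawing of G
  refine ⟨fun z => pos (some z), γG, ?_, ?_, ?_, ?_, ?_⟩
  · intro z1 z2 h
    exact Option.some_injective _ (hposInj h)
  · -- endpoints and injectivity
    intro a b k hk
    by_cases h1 : a = u ∧ b = v ∧ k = G.mult u v - 1
    · obtain ⟨ha, hb, hkk⟩ := h1
      rw [ha, hb, g1 k hkk]
      simp only [Path.coe_toContinuousMap]
      exact ⟨(NP _ _).source, (NP _ _).target, hNPinj _ _ (hfne _ _ _ _ (by decide)) huv⟩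
    · by_cases h2 : a = v ∧ b = u ∧ k = G.mult u v - 1
      · obtain ⟨ha, hb, hkk⟩ := h2
        rw [ha, hb, g2 k hkk]
        simp only [Path.coe_toContinuousMap]
        exact ⟨(NP _ _).symm.source, (NP _ _).symm.target,
          hNPsymmInj _ _ (hfne _ _ _ _ (by decide)) huv⟩
      · by_cases h3 : a = u ∧ b = w ∧ k = G.mult u w - 1
        · obtain ⟨ha, hb, hkk⟩ := h3
          rw [ha, hb, g3 k hkk]
          simp only [Path.coe_toContinuousMap]
          exact ⟨(NP _ _).source, (NP _ _).target,
            hNPinj _ _ (hfne _ _ _ _ (by decide)) huw⟩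
        · by_cases h4 : a = w ∧ b = u ∧ k = G.mult u w - 1
          · obtain ⟨ha, hb, hkk⟩ := h4
            rw [ha, hb, g4 k hkk]
            simp only [Path.coe_toContinuousMap]
            exact ⟨(NP _ _).symm.source, (NP _ _).symm.target,
              hNPsymmInj _ _ (hfne _ _ _ _ (by decide)) huw⟩
          · by_cases h5 : a = v ∧ b = w ∧ k = G.mult v w - 1
            · obtain ⟨ha, hb, hkk⟩ := h5
              rw [ha, hb, g5 k hkk]
              simp only [Path.coe_toContinuousMap]
              exact ⟨(NP _ _).source, (NP _ _).target,
                hNPinj _ _ (hfne _ _ _ _ (by decide)) hvw⟩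
            · by_cases h6 : a = w ∧ b = v ∧ k = G.mult v w - 1
              · obtain ⟨ha, hb, hkk⟩ := h6
                rw [ha, hb, g6 k hkk]
                simp only [Path.coe_toContinuousMap]
                exact ⟨(NP _ _).symm.source, (NP _ _).symm.target,
                  hNPsymmInj _ _ (hfne _ _ _ _ (by decide)) hvw⟩
              · rw [g7 a b k h1 h2 h3 h4 h5 h6]
                exact hEnds (some a) (some b) k (hfall a b k hk h1 h2 h3 h4 h5 h6)
  · -- symmetry
    intro a b k t
    by_cases h1 : a = u ∧ b = v ∧ k = G.mult u v - 1
    · obtain ⟨ha, hb, hkk⟩ := h1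
      rw [ha, hb, g1 k hkk, g2 k hkk]
      simp [Path.symm_apply]
    · by_cases h2 : a = v ∧ b = u ∧ k = G.mult u v - 1
      · obtain ⟨ha, hb, hkk⟩ := h2
        rw [ha, hb, g1 k hkk, g2 k hkk]
        simp [Path.symm_apply]
      · by_cases h3 : a = u ∧ b = w ∧ k = G.mult u w - 1
        · obtain ⟨ha, hb, hkk⟩ := h3
          rw [ha, hb, g3 k hkk, g4 k hkk]
          simp [Path.symm_apply]
        · by_cases h4 : a = w ∧ b = u ∧ k = G.mult u w - 1
          · obtain ⟨ha, hb, hkk⟩ := h4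
            rw [ha, hb, g3 k hkk, g4 k hkk]
            simp [Path.symm_apply]
          · by_cases h5 : a = v ∧ b = w ∧ k = G.mult v w - 1
            · obtain ⟨ha, hb, hkk⟩ := h5
              rw [ha, hb, g5 k hkk, g6 k hkk]
              simp [Path.symm_apply]
            · by_cases h6 : a = w ∧ b = v ∧ k = G.mult v w - 1
              · obtain ⟨ha, hb, hkk⟩ := h6
                rw [ha, hb, g5 k hkk, g6 k hkk]
                simp [Path.symm_apply]
              · rw [g7 a b k h1 h2 h3 h4 h5 h6,
                  g7 b a k (fun hh => h2 ⟨hh.2.1, hh.1, hh.2.2⟩)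
                    (fun hh => h1 ⟨hh.2.1, hh.1, hh.2.2⟩)
                    (fun hh => h4 ⟨hh.2.1, hh.1, hh.2.2⟩)
                    (fun hh => h3 ⟨hh.2.1, hh.1, hh.2.2⟩)
                    (fun hh => h6 ⟨hh.2.1, hh.1, hh.2.2⟩)
                    (fun hh => h5 ⟨hh.2.1, hh.1, hh.2.2⟩)]
                exact hSymm (some a) (some b) k t
  · -- interiors avoid vertices
    intro a b k hk t ht0 ht1 z
    rcases hclass a b k hk t ht0 ht1 with ⟨q, -, -, hmem⟩ | ⟨hk2, heq⟩
    · exact hNV (E1 q) (E2 q) (hEne q) _ hmem z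
    · rw [heq]
      exact hInt (some a) (some b) k hk2 t ht0 ht1 (some z)
  · -- disjointness of interiors
    intro a b k a' b' k' hk hk' hne t t' ht0 ht1 ht0' ht1'
    rcases hclass a b k hk t ht0 ht1 with ⟨q, hs, hkq, hmem⟩ | ⟨hk2, heq⟩ <;>
      rcases hclass a' b' k' hk' t' ht0' ht1' with ⟨q', hs', hkq', hmem'⟩ | ⟨hk2', heq'⟩
    · by_cases hqq : q = q'
      · subst hqq
        rcases hne with hne | hne
        · exact absurd (hs.trans hs'.symm) hne
        · exact absurd (hkq.trans hkq'.symm) hne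
      · exact hNNall q q' hqq _ hmem _ hmem'
    · rw [heq']
      exact hNO (E1 q) (E2 q) (hEne q) _ hmem a' b' k' hk2' t' ht0' ht1'
    · rw [heq]
      exact (hNO (E1 q') (E2 q') (hEne q') _ hmem' a b k hk2 t ht0 ht1).symm
    · rw [heq, heq']
      refine hDisj (some a) (some b) k (some a') (some b') k' hk2 hk2' ?_ t t' ht0 ht1 ht0' ht1'
      rcases hne with hne | hne
      · exact Or.inl (fun hh => hne (sym2_eq_of_map (Option.some_injective _) hh))
      · exact Or.inr hne

end DYY

end

/-- If `G` is a non-planar multigraph and `G'` is obtained from `G`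
by a Δ-YY transformation, then `G'` is non-planar. -/
theorem stmt_1 (G G' : MG) (h : MG.DeltaYYStep G G') (hG : ¬ G.IsPlanar) :
    ¬ G'.IsPlanar := by
  intro hG'
  obtain ⟨u, v, w, hd, hiso⟩ := h
  apply hG
  have h2 : DYY.PlanarIn G' ℂ :=
    DYY.planarIn_of_homeomorph Complex.equivRealProdCLM.toHomeomorph.symm
      ((DYY.isPlanar_iff_planarIn G').mp hG')
  have h3 : DYY.PlanarIn (G.deltaYY u v w) ℂ := DYY.planarIn_of_iso hiso h2
  exact (DYY.isPlanar_iff_planarIn G).mpr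
    (DYY.planarIn_of_homeomorph Complex.equivRealProdCLM.toHomeomorph
      (DYY.deltaYY_planar hd h3))
end

section
/- Let G be a multigraph and let G' be obtained from G by a Δ-YY transformation. Then α(G) ≤ α(G') ≤ α(G) + 2, where α denotes the maximum size of an independent set. -/
open scoped Classical

/-! The old vertices keep every adjacency except possibly along the thinned connections `uv`,
`uw`, `vw`, and the new vertex is a fresh one, so an independent set of `G` stays independent
in `G'`. Conversely, an independent set `T` of `G'` meets `{x, u, v}` (with `x` the new vertex)
in at most two vertices, since `x` is adjacent to `u` and to `v`; the rest of `T` avoids `u` and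
`v`, hence every thinned connection, so it is independent in `G`. -/

namespace MG

instance (G : MG) : Finite G.V := @Finite.of_fintype _ G.fin

lemma isIndepSet_empty (G : MG) : G.IsIndepSet ∅ := fun _ h => h.elim

lemma bddAbove_ncard_indepSets (G : MG) :
    BddAbove {n | ∃ S : Set G.V, G.IsIndepSet S ∧ S.ncard = n} :=
  ⟨Nat.card G.V, by rintro _ ⟨S, -, rfl⟩; exact Set.ncard_le_card S⟩

lemma IsIndepSet.ncard_le_indepNum {G : MG} {S : Set G.V} (h : G.IsIndepSet S) :
    S.ncard ≤ G.indepNum :=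
  le_csSup G.bddAbove_ncard_indepSets ⟨S, h, rfl⟩

lemma indepNum_le {G : MG} {m : ℕ} (h : ∀ S : Set G.V, G.IsIndepSet S → S.ncard ≤ m) :
    G.indepNum ≤ m :=
  csSup_le ⟨0, ∅, G.isIndepSet_empty, Set.ncard_empty _⟩ <| by
    rintro _ ⟨S, hS, rfl⟩
    exact h S hS

lemma IsIndepSet.image {G H : MG} {f : G.V → H.V} (hf : ∀ a b, H.Adj (f a) (f b) → G.Adj a b)
    {S : Set G.V} (hS : G.IsIndepSet S) : H.IsIndepSet (f '' S) := by
  rintro - ⟨a, ha, rfl⟩ - ⟨b, hb, rfl⟩ hab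
  exact hS a ha b hb (hf a b hab)

lemma indepNum_le_of_injective {G H : MG} (f : G.V → H.V) (hf : Function.Injective f)
    (hadj : ∀ a b, H.Adj (f a) (f b) → G.Adj a b) : G.indepNum ≤ H.indepNum :=
  indepNum_le fun S hS => Set.ncard_image_of_injective S hf ▸ (hS.image hadj).ncard_le_indepNum

lemma Iso.symm {G H : MG} (h : Iso G H) : Iso H G := by
  obtain ⟨e, he⟩ := h
  exact ⟨e.symm, fun a b => by rw [← he, e.apply_symm_apply, e.apply_symm_apply]⟩

lemma Iso.indepNum_le {G H : MG} (h : Iso G H) : G.indepNum ≤ H.indepNum := by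
  obtain ⟨e, he⟩ := h
  exact indepNum_le_of_injective e e.injective fun a b => by simp only [Adj, he, imp_self]

lemma Iso.indepNum_eq {G H : MG} (h : Iso G H) : G.indepNum = H.indepNum :=
  h.indepNum_le.antisymm h.symm.indepNum_le

lemma triCount_eq_zero {V : Type} {u v w a b : V} (hau : a ≠ u) (hav : a ≠ v) (hbu : b ≠ u)
    (hbv : b ≠ v) : triCount u v w a b = 0 := by
  simp [triCount, hau, hav, hbu, hbv]

section DeltaYY

variable (G : MG) (u v w : G.V)

lemma deltaYY_adj_some {a b : G.V} (h : (G.deltaYY u v w).Adj (some a) (some b)) : G.Adj a b :=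
  lt_of_lt_of_le h (Nat.sub_le _ _)

lemma deltaYY_mult_some_of_ne {a b : G.V} (hau : a ≠ u) (hav : a ≠ v) (hbu : b ≠ u)
    (hbv : b ≠ v) : (G.deltaYY u v w).mult (some a) (some b) = G.mult a b := by
  change G.mult a b - triCount u v w a b = _
  rw [triCount_eq_zero hau hav hbu hbv, Nat.sub_zero]

lemma deltaYY_adj_none {b : G.V} (hb : b = u ∨ b = v ∨ b = w) :
    (G.deltaYY u v w).Adj none (some b) := by
  change 0 < if b = u ∨ b = v ∨ b = w then 2 else 0
  rw [if_pos hb]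
  exact two_pos

lemma indepNum_le_indepNum_deltaYY : G.indepNum ≤ (G.deltaYY u v w).indepNum :=
  indepNum_le_of_injective some (Option.some_injective _) fun _ _ => G.deltaYY_adj_some u v w

variable {G u v w}

lemma IsIndepSet.of_deltaYY {T : Set (G.deltaYY u v w).V} (hT : (G.deltaYY u v w).IsIndepSet T) :
    G.IsIndepSet ({a | some a ∈ T} \ {u, v}) := by
  rintro a ⟨ha, hauv⟩ b ⟨hb, hbuv⟩ hab
  simp only [Set.mem_insert_iff, Set.mem_singleton_iff, not_or] at hauv hbuv
  refine hT _ ha _ hb ?_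
  change 0 < (G.deltaYY u v w).mult (some a) (some b)
  rwa [deltaYY_mult_some_of_ne G u v w hauv.1 hauv.2 hbuv.1 hbuv.2]

lemma IsIndepSet.ncard_inter_deltaYY_le_two {T : Set (G.deltaYY u v w).V}
    (hT : (G.deltaYY u v w).IsIndepSet T) : (T ∩ {none, some u, some v}).ncard ≤ 2 := by
  by_cases hx : none ∈ T
  · have hsub : T ∩ {none, some u, some v} ⊆ {none} := by
      rintro _ ⟨hy, rfl | rfl | rfl⟩
      · rfl
      · exact (hT _ hx _ hy (G.deltaYY_adj_none u v w (Or.inl rfl))).elim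
      · exact (hT _ hx _ hy (G.deltaYY_adj_none u v w (Or.inr (Or.inl rfl)))).elim
    calc _ ≤ ({none} : Set (Option G.V)).ncard := Set.ncard_le_ncard hsub
      _ ≤ 2 := by simp
  · have hsub : T ∩ {none, some u, some v} ⊆ {some u, some v} :=
      fun y ⟨hy, hy'⟩ => hy'.resolve_left fun h => hx (h ▸ hy)
    calc _ ≤ ({some u, some v} : Set (Option G.V)).ncard := Set.ncard_le_ncard hsub
      _ ≤ ({some v} : Set (Option G.V)).ncard + 1 := Set.ncard_insert_le _ _
      _ = 2 := by simp

variable (G u v w)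

lemma indepNum_deltaYY_le : (G.deltaYY u v w).indepNum ≤ G.indepNum + 2 := by
  refine indepNum_le fun T hT => ?_
  set S : Set G.V := {a | some a ∈ T} \ {u, v}
  have hsub : T ⊆ some '' S ∪ (T ∩ {none, some u, some v}) := by
    rintro (_ | a) ha
    · exact Or.inr ⟨ha, Or.inl rfl⟩
    · by_cases huv : a = u ∨ a = v
      · exact Or.inr ⟨ha, Or.inr (huv.imp (congrArg some) (congrArg some))⟩
      · exact Or.inl ⟨a, ⟨ha, huv⟩, rfl⟩
  calc T.ncard ≤ (some '' S).ncard + (T ∩ {none, some u, some v}).ncard :=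
        (Set.ncard_le_ncard hsub).trans (Set.ncard_union_le _ _)
    _ ≤ G.indepNum + 2 := by
        rw [Set.ncard_image_of_injective _ (Option.some_injective _)]
        exact add_le_add hT.of_deltaYY.ncard_le_indepNum hT.ncard_inter_deltaYY_le_two

end DeltaYY

end MG

/-- If `G'` is obtained from `G` by a Δ-YY transformation then
`α(G) ≤ α(G') ≤ α(G) + 2`. -/
theorem stmt_2 (G G' : MG) (h : MG.DeltaYYStep G G') :
    G.indepNum ≤ G'.indepNum ∧ G'.indepNum ≤ G.indepNum + 2 := by
  obtain ⟨u, v, w, -, hiso⟩ := h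
  rw [← hiso.indepNum_eq]
  exact ⟨G.indepNum_le_indepNum_deltaYY u v w, G.indepNum_deltaYY_le u v w⟩
end

section
/- Let G be a 2-connected multigraph and let G' be obtained from G by a YY-Δ transformation. Then G' is 2-connected. -/
open scoped Classical

/-!
Collapse the centre `x` of the wye onto an external vertex `a` that survives the deletion of a
vertex set `S` of size at most one. This maps `G - S` onto `G' - S` and sends every edge of `G`
either to an edge of `G'` or to a single vertex: edges at `x` end at `u`, `v` or `w`, which the
transformation makes pairwise adjacent. Hence `G' - S` inherits the connectivity of `G - S`.
-/

namespace MG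

lemma Adj.ne {G : MG} {a b : G.V} (h : G.Adj a b) : a ≠ b := by
  rintro rfl
  exact absurd h (by simp [Adj, G.loopless])

lemma Connected.deleteVerts_of_map {G H : MG} {S : Set G.V} {T : Set H.V} (f : G.V → H.V)
    (hG : (G.deleteVerts S).Connected) (hmaps : ∀ y ∉ S, f y ∉ T)
    (hsurj : ∀ z ∉ T, ∃ y ∉ S, f y = z)
    (hadj : ∀ a b, a ∉ S → b ∉ S → G.Adj a b → f a = f b ∨ H.Adj (f a) (f b)) :
    (H.deleteVerts T).Connected := by
  obtain ⟨⟨y₀⟩, hpath⟩ := hG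
  let g : (G.deleteVerts S).V → (H.deleteVerts T).V := fun y => ⟨f y.1, hmaps y.1 y.2⟩
  have hg : Function.Surjective g := fun z => by
    obtain ⟨y, hy, hyz⟩ := hsurj z.1 z.2
    exact ⟨⟨y, hy⟩, Subtype.ext hyz⟩
  refine ⟨⟨g y₀⟩, fun p q => ?_⟩
  obtain ⟨p, rfl⟩ := hg p
  obtain ⟨q, rfl⟩ := hg q
  refine Relation.ReflTransGen.lift' g (fun a b hab => ?_) p q (hpath p q)
  rcases hadj a.1 b.1 a.2 b.2 hab with h | h
  · show Relation.ReflTransGen _ (g a) (g b)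
    rw [show g a = g b from Subtype.ext h]
  · exact .single h

lemma Iso.kConnected {G H : MG} {k : ℕ} (h : G.Iso H) (hG : G.KConnected k) :
    H.KConnected k := by
  obtain ⟨e, he⟩ := h
  have horder : G.order = H.order := @Fintype.card_congr _ _ G.fin H.fin e
  refine ⟨horder ▸ hG.1, fun T hT => ?_⟩
  have hcard : (e ⁻¹' T).ncard = T.ncard :=
    Set.ncard_preimage_of_injective_subset_range e.injective (by simp)
  refine (hG.2 _ (hcard ▸ hT)).deleteVerts_of_map e (fun _ hy => hy)
    (fun z hz => ⟨e.symm z, fun hz' => hz (e.apply_symm_apply z ▸ hz'), e.apply_symm_apply z⟩)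
    (fun a b _ _ hab => Or.inr ?_)
  rwa [Adj, he]

lemma triCount_eq_one {V : Type} {u v w a b : V}
    (ha : a = u ∨ a = v ∨ a = w) (hb : b = u ∨ b = v ∨ b = w) (hab : a ≠ b) :
    triCount u v w a b = 1 := by
  rw [triCount, if_pos]
  rcases ha with rfl | rfl | rfl <;> rcases hb with rfl | rfl | rfl <;>
    simp_all [Sym2.eq_swap]

section yyDelta

variable {G : MG} {x u v w : G.V}

lemma IsWye.eq_or_eq_or_eq_of_adj (hwye : G.IsWye x u v w) {y : G.V} (hy : G.Adj x y) :
    y = u ∨ y = v ∨ y = w := by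
  obtain ⟨-, -, -, -, -, -, -, -, -, hzero⟩ := hwye
  by_contra! hne
  exact absurd hy (by simp [Adj, hzero y hne.1 hne.2.1 hne.2.2])

lemma yyDelta_adj_iff {a b : (G.yyDelta x u v w).V} :
    (G.yyDelta x u v w).Adj a b ↔ a ≠ b ∧ 0 < G.mult a.1 b.1 + triCount u v w a.1 b.1 := by
  simp only [Adj, yyDelta]
  split_ifs with hab
  · exact iff_of_false (lt_irrefl 0) fun h => h.1 hab
  · exact (and_iff_right hab).symm

lemma yyDelta_adj_of_adj {a b : (G.yyDelta x u v w).V} (h : G.Adj a.1 b.1) :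
    (G.yyDelta x u v w).Adj a b :=
  yyDelta_adj_iff.2 ⟨fun hab => h.ne (congrArg _ hab), Nat.add_pos_left h _⟩

lemma yyDelta_adj_of_external {a b : (G.yyDelta x u v w).V} (ha : a.1 = u ∨ a.1 = v ∨ a.1 = w)
    (hb : b.1 = u ∨ b.1 = v ∨ b.1 = w) (hab : a ≠ b) : (G.yyDelta x u v w).Adj a b := by
  refine yyDelta_adj_iff.2 ⟨hab, ?_⟩
  rw [triCount_eq_one ha hb (Subtype.val_injective.ne hab)]
  omega

noncomputable def wyeCollapse (a : (G.yyDelta x u v w).V) (y : G.V) : (G.yyDelta x u v w).V :=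
  if hy : y = x then a else ⟨y, hy⟩

lemma wyeCollapse_centre_adj (hwye : G.IsWye x u v w) {a : (G.yyDelta x u v w).V}
    (ha : a.1 = u ∨ a.1 = v ∨ a.1 = w) {y : G.V} (hy : G.Adj x y) :
    wyeCollapse a x = wyeCollapse a y ∨
      (G.yyDelta x u v w).Adj (wyeCollapse a x) (wyeCollapse a y) := by
  have hyx : y ≠ x := hy.ne.symm
  simp only [wyeCollapse, ↓reduceDIte, hyx]
  by_cases hay : a = ⟨y, hyx⟩
  · exact Or.inl hay
  · exact Or.inr (yyDelta_adj_of_external ha (hwye.eq_or_eq_or_eq_of_adj hy) hay)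

lemma wyeCollapse_adj (hwye : G.IsWye x u v w) {a : (G.yyDelta x u v w).V}
    (ha : a.1 = u ∨ a.1 = v ∨ a.1 = w) {y z : G.V} (hyz : G.Adj y z) :
    wyeCollapse a y = wyeCollapse a z ∨
      (G.yyDelta x u v w).Adj (wyeCollapse a y) (wyeCollapse a z) := by
  by_cases hy : y = x
  · subst hy
    exact wyeCollapse_centre_adj hwye ha hyz
  by_cases hz : z = x
  · subst hz
    rw [Adj, G.symm] at hyz
    rcases wyeCollapse_centre_adj hwye ha hyz with h | h
    · exact Or.inl h.symm
    · exact Or.inr (by rwa [Adj, MG.symm])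
  simp only [wyeCollapse, hy, hz, ↓reduceDIte]
  exact Or.inr (yyDelta_adj_of_adj hyz)

theorem IsWye.yyDelta_kConnected_two (hwye : G.IsWye x u v w) (hG : G.KConnected 2) :
    (G.yyDelta x u v w).KConnected 2 := by
  let := (G.yyDelta x u v w).fin
  have ⟨huv, huw, hvw, hxu, hxv, hxw, _⟩ := hwye
  refine ⟨Fintype.two_lt_card_iff.2 ⟨⟨u, hxu.symm⟩, ⟨v, hxv.symm⟩, ⟨w, hxw.symm⟩,
    mt (congrArg Subtype.val) huv, mt (congrArg Subtype.val) huw,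
    mt (congrArg Subtype.val) hvw⟩, fun S hS => ?_⟩
  have hSsub : S.Subsingleton := Set.ncard_le_one_iff_subsingleton.1 (by omega)
  obtain ⟨a, ha, haS⟩ :
      ∃ a : (G.yyDelta x u v w).V, (a.1 = u ∨ a.1 = v ∨ a.1 = w) ∧ a ∉ S := by
    by_cases hu : ⟨u, hxu.symm⟩ ∈ S
    · exact ⟨⟨v, hxv.symm⟩, Or.inr (Or.inl rfl),
        fun hv => huv (congrArg Subtype.val (hSsub hu hv))⟩
    · exact ⟨_, Or.inl rfl, hu⟩
  refine (hG.2 (Subtype.val '' S) ?_).deleteVerts_of_map (wyeCollapse a) ?_ ?_ ?_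
  · exact (Set.ncard_image_of_injective S Subtype.val_injective).trans_lt hS
  · intro y hy
    by_cases hyx : y = x
    · simpa only [wyeCollapse, hyx, ↓reduceDIte] using haS
    · simp only [wyeCollapse, hyx, ↓reduceDIte]
      exact fun h => hy ⟨_, h, rfl⟩
  · exact fun z hz => ⟨z.1, Subtype.val_injective.mem_set_image.not.2 hz, dif_neg z.2⟩
  · exact fun y z _ _ hyz => wyeCollapse_adj hwye ha hyz

end yyDelta

end MG

/-- If `G` is a 2-connected multigraph and `G'` is obtained from `G`
by a YY-Δ transformation, then `G'` is 2-connected. -/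
theorem stmt_5 (G G' : MG) (hG : G.KConnected 2) (h : MG.YYDeltaStep G G') :
    G'.KConnected 2 := by
  obtain ⟨x, u, v, w, hwye, hiso⟩ := h
  exact hiso.kConnected (hwye.yyDelta_kConnected_two hG)
end

section
/- Let G be a connected multigraph, let u, v, w be the three vertices of the delta (respectively the external vertices of the wye) on which a Δ-YY transformation (respectively a YY-Δ transformation) is performed to produce G', and let i be the number of non-empty connections among the pairs uv, uw, vw remaining after deleting the edges of that delta (respectively wye). Then the cyclomatic number c' of the simplification G'^S satisfies c' = c − (1 − i) in the case of a Δ-YY transformation, and c' = c + (1 − i) in the case of a YY-Δ transformation, where c is the cyclomatic number of the simplification G^S. -/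
open scoped Classical

/-!
The cyclomatic number of `G^S` is `m - n + 1`, where `m` counts the non-empty connections of `G`.
The non-empty connections split into those avoiding a vertex `x` and those at `x`, the latter in
bijection with the neighbours of `x`. Away from the new vertex, a Δ-YY transformation only
removes one edge from each of `uv, uw, vw`, so such a connection survives exactly when it had
size at least 2; with the three connections at the new vertex, `m' = m - 3 + i + 3` and
`n' = n + 1`. Dually, a YY-Δ transformation deletes the centre and its three connections and
makes `uv, uw, vw` non-empty, `i` of which already were: `m' = m - 3 + (3 - i)`, `n' = n - 1`.
-/

open Function Set

theorem Sym2.range_map {α β : Type*} (f : α → β) :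
    range (Sym2.map f) = {z | ∀ b ∈ z, b ∈ range f} := by
  ext z
  induction z using Sym2.ind with
  | _ a b =>
    simp only [mem_range, mem_ofPred_eq, Sym2.mem_iff, forall_eq_or_imp, forall_eq]
    constructor
    · rintro ⟨q, hq⟩
      induction q using Sym2.ind with
      | _ c d =>
        rw [Sym2.map_mk, Sym2.eq_iff] at hq
        rcases hq with ⟨rfl, rfl⟩ | ⟨rfl, rfl⟩ <;> exact ⟨⟨_, rfl⟩, ⟨_, rfl⟩⟩
    · rintro ⟨⟨c, rfl⟩, ⟨d, rfl⟩⟩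
      exact ⟨s(c, d), rfl⟩

theorem ncard_support_comp_sym2Map {α β M : Type*} [Zero M] {e : α → β} (he : Injective e)
    (g : Sym2 β → M) :
    (support (g ∘ Sym2.map e)).ncard = {z ∈ support g | ∀ b ∈ z, b ∈ range e}.ncard := by
  rw [support_comp_eq_preimage, ← ncard_image_of_injective _ (Sym2.map.injective he),
    image_preimage_eq_inter_range, Sym2.range_map]
  rfl

theorem ncard_support_comp_sym2Map_of_range_eq_compl {α β M : Type*} [Zero M] {e : α → β}
    (he : Injective e) {x : β} (hx : range e = {x}ᶜ) (g : Sym2 β → M) :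
    (support (g ∘ Sym2.map e)).ncard = {z ∈ support g | x ∉ z}.ncard := by
  rw [ncard_support_comp_sym2Map he, hx]
  congr 1
  ext z
  exact and_congr_right fun _ => ⟨fun h hxz => h x hxz rfl, fun h b hb hbx => h (hbx ▸ hb)⟩

theorem support_add_indicator_one {α : Type*} (f : α → ℕ) (T : Set α) :
    support (f + T.indicator 1) = support f ∪ T := by
  ext p
  by_cases hp : p ∈ T <;> simp [hp]

theorem ncard_support_tsub_indicator_one_add {α : Type*} {f : α → ℕ} {T : Set α}
    (hT : T ⊆ support f) (hf : (support f).Finite) :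
    (support (f - T.indicator 1)).ncard + T.ncard
      = (support f).ncard + {p ∈ T | 2 ≤ f p}.ncard := by
  set S := {p ∈ T | f p = 1}
  have hST : S ⊆ T := sep_subset _ _
  have hsupp : support (f - T.indicator 1) = support f \ S := by
    ext p
    by_cases hp : p ∈ T
    · have := hT hp
      simp only [mem_support, ne_eq, Pi.sub_apply, hp, indicator_of_mem, Pi.one_apply,
        mem_sdiff, mem_ofPred_eq, true_and, S] at this ⊢
      omega
    · simp [hp, S]
  have hge : {p ∈ T | 2 ≤ f p} = T \ S := by
    ext p
    by_cases hp : p ∈ T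
    · have : f p ≠ 0 := hT hp
      simp only [mem_sep_iff, mem_sdiff, S, hp, true_and]
      omega
    · simp [hp]
  have hTfin : T.Finite := hf.subset hT
  rw [hsupp, hge, ← ncard_sdiff_add_ncard_of_subset (hST.trans hT) hf,
    ← ncard_sdiff_add_ncard_of_subset hST hTfin]
  ring

namespace MG

theorem numConn_eq_ncard_support (G : MG) : G.numConn = (support G.multS).ncard := rfl

theorem order_eq_natCard (G : MG) : G.order = Nat.card G.V :=
  (@Nat.card_eq_fintype_card _ G.fin).symm

instance inst_s8 (G : MG) : Finite G.V := @Finite.of_fintype _ G.fin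

theorem cyclomaticS_eq_of_iso {G H : MG} (h : Iso G H) : G.cyclomaticS = H.cyclomaticS := by
  obtain ⟨e, he⟩ := h
  have hmult : G.multS = H.multS ∘ Sym2.map e := funext (Sym2.ind fun a b => (he a b).symm)
  have hconn : G.numConn = H.numConn := by
    rw [numConn_eq_ncard_support, numConn_eq_ncard_support, hmult,
      ncard_support_comp_sym2Map e.injective, e.range_eq_univ]
    simp only [mem_univ, implies_true, and_true, ofPred_mem_eq]
  rw [cyclomaticS, cyclomaticS, hconn, order_eq_natCard, order_eq_natCard, Nat.card_congr e]

theorem numConn_eq_add_ncard_adj (G : MG) (x : G.V) :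
    G.numConn = {p ∈ support G.multS | x ∉ p}.ncard + {y | G.Adj x y}.ncard := by
  have hsplit : support G.multS
      = {p ∈ support G.multS | x ∉ p} ∪ (fun y => s(x, y)) '' {y | G.Adj x y} := by
    ext p
    constructor
    · intro hp
      by_cases hx : x ∈ p
      · obtain ⟨y, rfl⟩ := Sym2.mem_iff_exists.1 hx
        exact Or.inr ⟨y, Nat.pos_of_ne_zero hp, rfl⟩
      · exact Or.inl ⟨hp, hx⟩
    · rintro (⟨hp, -⟩ | ⟨y, hy, rfl⟩)
      · exact hp
      · exact hy.ne'
  have hdisj :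
      Disjoint {p ∈ support G.multS | x ∉ p} ((fun y => s(x, y)) '' {y | G.Adj x y}) := by
    rw [disjoint_right]
    rintro _ ⟨y, -, rfl⟩ ⟨-, h⟩
    exact h (Sym2.mem_mk_left x y)
  rw [numConn_eq_ncard_support]
  conv_lhs => rw [hsplit]
  rw [ncard_union_eq hdisj, ncard_image_of_injective _ (fun _ _ => Sym2.congr_right.1)]

def triangleEdges {V : Type} (u v w : V) : Set (Sym2 V) := {s(u, v), s(u, w), s(v, w)}

theorem triCount_eq_indicator {V : Type} (u v w a b : V) :
    triCount u v w a b = (triangleEdges u v w).indicator 1 s(a, b) := by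
  rw [triCount, indicator_apply]
  congr

section triangleEdges

variable {V : Type} {u v w : V}

theorem ncard_triangleEdges (huv : u ≠ v) (huw : u ≠ w) (hvw : v ≠ w) :
    (triangleEdges u v w).ncard = 3 :=
  ncard_eq_three.2 ⟨_, _, _, by simp [*], by simp [*], by simp [*], rfl⟩

theorem mk_self_notMem_triangleEdges (huv : u ≠ v) (huw : u ≠ w) (hvw : v ≠ w) (a : V) :
    s(a, a) ∉ triangleEdges u v w := by
  grind [triangleEdges, Sym2.eq_iff]

theorem notMem_of_mem_triangleEdges {x : V} (hxu : x ≠ u) (hxv : x ≠ v) (hxw : x ≠ w)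
    {p : Sym2 V} (hp : p ∈ triangleEdges u v w) : x ∉ p := by
  rcases hp with rfl | rfl | rfl <;> simp [*]

end triangleEdges

-- Typed at `(G.deltaYY u v w).V` rather than `Option G.V`, which `rw` would not identify.
theorem multS_deltaYY_comp_some (G : MG) (u v w : G.V) :
    (G.deltaYY u v w).multS ∘ @Sym2.map G.V (G.deltaYY u v w).V some
      = G.multS - (triangleEdges u v w).indicator 1 :=
  funext (Sym2.ind fun a b => congrArg (G.mult a b - ·) (triCount_eq_indicator u v w a b))

theorem ncard_setOf_adj_deltaYY_none {G : MG} {u v w : G.V} (huv : u ≠ v) (huw : u ≠ w)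
    (hvw : v ≠ w) : {y | (G.deltaYY u v w).Adj none y}.ncard = 3 := by
  have hsome := Option.some_injective G.V
  refine ncard_eq_three.2 ⟨some u, some v, some w, hsome.ne huv, hsome.ne huw, hsome.ne hvw, ?_⟩
  ext (_ | b)
  · exact iff_of_false (lt_irrefl 0) (by rintro (h | h | h) <;> cases h)
  · show 0 < ite _ _ _ ↔ (some b : Option G.V) = some u ∨ some b = some v ∨ some b = some w
    simp only [Option.some.injEq]
    split_ifs with h <;> simpa using h

theorem numConn_deltaYY {G : MG} {u v w : G.V} (h : G.IsDelta u v w) :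
    (G.deltaYY u v w).numConn
      = G.numConn + {p ∈ triangleEdges u v w | 2 ≤ G.multS p}.ncard := by
  obtain ⟨huv, huw, hvw, hauv, hauw, havw⟩ := h
  have hT : triangleEdges u v w ⊆ support G.multS := by
    rintro _ (rfl | rfl | rfl) <;> exact Nat.pos_iff_ne_zero.1 ‹_›
  have key := ncard_support_tsub_indicator_one_add hT (toFinite _)
  rw [ncard_triangleEdges huv huw hvw, ← multS_deltaYY_comp_some,
    ncard_support_comp_sym2Map_of_range_eq_compl (β := (G.deltaYY u v w).V)
      (Option.some_injective _) (isCompl_range_some_none G.V).eq_compl] at key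
  rw [numConn_eq_add_ncard_adj _ none, ncard_setOf_adj_deltaYY_none huv huw hvw,
    numConn_eq_ncard_support G]
  omega

theorem order_deltaYY (G : MG) (u v w : G.V) : (G.deltaYY u v w).order = G.order + 1 := by
  rw [order_eq_natCard, order_eq_natCard]
  exact Finite.card_option

theorem multS_yyDelta (G : MG) {x u v w : G.V} (huv : u ≠ v) (huw : u ≠ w) (hvw : v ≠ w) :
    (G.yyDelta x u v w).multS
      = (G.multS + (triangleEdges u v w).indicator 1)
          ∘ @Sym2.map (G.yyDelta x u v w).V G.V Subtype.val := by
  refine funext (Sym2.ind fun a b => ?_)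
  show (G.yyDelta x u v w).mult a b
    = G.mult a.1 b.1 + (triangleEdges u v w).indicator 1 s(a.1, b.1)
  by_cases hab : a = b
  · subst hab
    rw [indicator_of_notMem (mk_self_notMem_triangleEdges huv huw hvw _)]
    exact ((G.yyDelta x u v w).loopless a).trans (G.loopless a.1).symm
  · rw [← triCount_eq_indicator]
    exact if_neg hab

theorem ncard_setOf_adj_of_isWye {G : MG} {x u v w : G.V} (h : G.IsWye x u v w) :
    {y | G.Adj x y}.ncard = 3 := by
  obtain ⟨huv, huw, hvw, -, -, -, hxu, hxv, hxw, hzero⟩ := h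
  refine ncard_eq_three.2 ⟨u, v, w, huv, huw, hvw, ?_⟩
  ext y
  simp only [mem_ofPred_eq, Adj, mem_insert_iff, mem_singleton_iff]
  constructor
  · intro hy
    by_contra! hne
    obtain ⟨hyu, hyv, hyw⟩ := hne
    exact hy.ne' (hzero y hyu hyv hyw)
  · rintro (rfl | rfl | rfl) <;> omega

theorem numConn_yyDelta {G : MG} {x u v w : G.V} (h : G.IsWye x u v w) :
    (G.yyDelta x u v w).numConn + {p ∈ triangleEdges u v w | 1 ≤ G.multS p}.ncard
      = G.numConn := by
  have hadj := ncard_setOf_adj_of_isWye h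
  obtain ⟨huv, huw, hvw, hxu, hxv, hxw, -⟩ := h
  set T := triangleEdges u v w
  set E := {p ∈ support G.multS | x ∉ p}
  have hTx : ∀ p ∈ T, x ∉ p := fun _ => notMem_of_mem_triangleEdges hxu hxv hxw
  have hG' : (G.yyDelta x u v w).numConn = (E ∪ T).ncard := by
    rw [numConn_eq_ncard_support, multS_yyDelta G huv huw hvw,
      ncard_support_comp_sym2Map_of_range_eq_compl (α := (G.yyDelta x u v w).V)
        Subtype.val_injective (x := x) Subtype.range_coe, support_add_indicator_one]
    congr 1
    ext p
    have := hTx p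
    simp only [mem_union, mem_ofPred_eq, E, T]
    tauto
  have hinter : E ∩ T = {p ∈ T | 1 ≤ G.multS p} := by
    ext p
    have := hTx p
    simp only [mem_inter_iff, mem_support, mem_ofPred_eq, E, T, Nat.one_le_iff_ne_zero]
    tauto
  have hunion := ncard_union_add_ncard_inter E T
  rw [G.numConn_eq_add_ncard_adj x, hadj, hG', ← hinter, hunion,
    ncard_triangleEdges huv huw hvw]

theorem order_yyDelta (G : MG) (x u v w : G.V) : (G.yyDelta x u v w).order + 1 = G.order := by
  rw [order_eq_natCard, order_eq_natCard, ← Finite.card_option]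
  exact Nat.card_congr (Equiv.optionSubtypeNe x)

end MG

/-- For a connected multigraph `G`, if `G'` is obtained by a Δ-YY
transformation on a delta `u, v, w`, then the cyclomatic number `c'` of the
simplification `G'^S` satisfies `c' = c - (1 - i)`, where `c` is the cyclomatic
number of `G^S` and `i` is the number of non-empty connections among the pairs
`uv, uw, vw` after the deletion of the edges of the delta (i.e. the number of
those pairs whose connection in `G` has size at least 2); and if `G'` is
obtained by a YY-Δ transformation on a wye with centre `x` and external
vertices `u, v, w`, then `c' = c + (1 - i)`, where now `i` is the number of
non-empty connections among `uv, uw, vw` after the deletion of the edges of the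
wye (the wye edges are all incident to `x`, so `i` is the number of those pairs
whose connection in `G` is non-empty). -/
theorem stmt_8 :
    (∀ G G' : MG, G.Connected → ∀ u v w : G.V, G.IsDelta u v w →
      MG.Iso (G.deltaYY u v w) G' →
      G'.cyclomaticS = G.cyclomaticS -
        (1 - ({p : Sym2 G.V |
            p ∈ ({s(u, v), s(u, w), s(v, w)} : Set (Sym2 G.V)) ∧
              2 ≤ G.multS p}.ncard : ℤ))) ∧
    (∀ G G' : MG, G.Connected → ∀ x u v w : G.V, G.IsWye x u v w →
      MG.Iso (G.yyDelta x u v w) G' →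
      G'.cyclomaticS = G.cyclomaticS +
        (1 - ({p : Sym2 G.V |
            p ∈ ({s(u, v), s(u, w), s(v, w)} : Set (Sym2 G.V)) ∧
              1 ≤ G.multS p}.ncard : ℤ))) := by
  constructor
  · intro G G' _ u v w hdelta hiso
    have hconn := MG.numConn_deltaYY hdelta
    unfold MG.triangleEdges at hconn
    have horder := G.order_deltaYY u v w
    rw [← MG.cyclomaticS_eq_of_iso hiso, MG.cyclomaticS, MG.cyclomaticS]
    omega
  · intro G G' _ x u v w hwye hiso
    have hconn := MG.numConn_yyDelta hwye
    unfold MG.triangleEdges at hconn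
    have horder := G.order_yyDelta x u v w
    rw [← MG.cyclomaticS_eq_of_iso hiso, MG.cyclomaticS, MG.cyclomaticS]
    omega
end

section
/- Let H be a simple 3-regular bipartite graph on n vertices and let G be the doubling of H. Then the Δ-YY equivalence class of G contains a multigraph with at most n/2 vertices; in particular every multigraph with the minimum number of vertices in the class has at most n/2 vertices. -/
open scoped Classical

/-!
Let `A ⊔ B` be the bipartition of `H`. In the doubling of `H` every vertex of `A` is the
centre of a wye, and since `A` is independent, a YY-Δ transformation at one vertex of `A`
only adds edges inside `B`, so every other vertex of `A` stays the centre of a wye. Doing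
YY-Δ at all vertices of the larger side therefore leaves at most `n / 2` vertices.
-/

namespace MG

open Finset

lemma triCount_eq_ite {V : Type} {u v w a b : V} (hab : a ≠ b) :
    triCount u v w a b =
      if a ∈ ({u, v, w} : Set V) ∧ b ∈ ({u, v, w} : Set V) then 1 else 0 := by
  unfold triCount
  congr 1
  simp only [Set.mem_insert_iff, Set.mem_singleton_iff, Sym2.eq_iff, eq_iff_iff]
  constructor
  · tauto
  · rintro ⟨rfl | rfl | rfl, rfl | rfl | rfl⟩ <;> simp_all

lemma triCount_map {α β : Type} {f : α → β} (hf : Function.Injective f) (u v w a b : α) :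
    triCount (f u) (f v) (f w) (f a) (f b) = triCount u v w a b := by
  unfold triCount
  simp only [Set.mem_insert_iff, Set.mem_singleton_iff, ← Sym2.map_mk,
    (Sym2.map.injective hf).eq_iff]

lemma isWye_of_mult {G : MG} {x u v w : G.V} (huv : u ≠ v) (huw : u ≠ w) (hvw : v ≠ w)
    (hx : ∀ y, G.mult x y = if y = u ∨ y = v ∨ y = w then 2 else 0) : G.IsWye x u v w := by
  have hne : ∀ y, G.mult x y = 2 → x ≠ y := fun y hy hxy => by
    subst hxy
    simp [G.loopless] at hy
  refine ⟨huv, huw, hvw, hne u (by simp [hx]), hne v (by simp [hx]), hne w (by simp [hx]),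
    by simp [hx], by simp [hx], by simp [hx], fun y hu hv hw => by simp [hx, hu, hv, hw]⟩

lemma yyDelta_mult_of_ne {G : MG} {x u v w : G.V} {a b : (G.yyDelta x u v w).V} (h : a ≠ b) :
    (G.yyDelta x u v w).mult a b = G.mult a.1 b.1 + triCount u v w a.1 b.1 :=
  if_neg h

lemma DYYEquiv.of_iso {G G' : MG} (h : Iso G G') : DYYEquiv G G' :=
  Relation.EqvGen.rel _ _ (Or.inr h)

lemma DYYEquiv.of_yyDeltaStep {G G' : MG} (h : YYDeltaStep G G') : DYYEquiv G G' :=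
  Relation.EqvGen.rel _ _ (Or.inl (Or.inr h))

/-- The result of YY-Δ transformations at all vertices of an independent set `S` in the
doubling of `H`: each vertex of `S` leaves one edge between every two of its neighbours. -/
noncomputable abbrev yyDeltaDoubling {V : Type} [Fintype V] (H : SimpleGraph V)
    (S : Finset V) : MG where
  V := {v : V // v ∉ S}
  fin := inferInstance
  mult a b := if a = b then 0 else
    (if H.Adj a.1 b.1 then 2 else 0) + #{s ∈ S | H.Adj s a.1 ∧ H.Adj s b.1}
  symm a b := by
    rcases eq_or_ne a b with rfl | h
    · rfl
    · simp only [if_neg h, if_neg h.symm, H.adj_comm a.1 b.1, and_comm]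
  loopless _ := if_pos rfl

section yyDeltaDoubling

variable {V : Type} [Fintype V] (H : SimpleGraph V)

lemma yyDeltaDoubling_mult_of_ne {S : Finset V} {a b : (yyDeltaDoubling H S).V} (h : a ≠ b) :
    (yyDeltaDoubling H S).mult a b =
      (if H.Adj a.1 b.1 then 2 else 0) + #{s ∈ S | H.Adj s a.1 ∧ H.Adj s b.1} :=
  if_neg h

lemma order_yyDeltaDoubling (S : Finset V) :
    (yyDeltaDoubling H S).order = Fintype.card V - #S := by
  change Fintype.card {v : V // v ∉ S} = _
  rw [Fintype.card_subtype_compl, Fintype.card_coe]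

lemma iso_doubling_yyDeltaDoubling_empty : Iso (doubling H) (yyDeltaDoubling H ∅) := by
  refine ⟨(Equiv.subtypeUnivEquiv Finset.notMem_empty).symm, fun (u v : V) => ?_⟩
  change (yyDeltaDoubling H ∅).mult ⟨u, _⟩ ⟨v, _⟩ = if H.Adj u v then 2 else 0
  rcases eq_or_ne u v with rfl | h
  · rw [MG.loopless, if_neg H.irrefl]
  · rw [yyDeltaDoubling_mult_of_ne H fun he => h (congrArg Subtype.val he)]
    simp

lemma yyDeltaDoubling_mult_of_forall_not_adj {S : Finset V} {a : V} (ha : a ∉ S)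
    (hS : ∀ s ∈ S, ¬ H.Adj s a) (y : {v : V // v ∉ S}) :
    (yyDeltaDoubling H S).mult ⟨a, ha⟩ y = if H.Adj a y.1 then 2 else 0 := by
  rcases eq_or_ne ⟨a, ha⟩ y with rfl | h
  · rw [MG.loopless, if_neg H.irrefl]
  · rw [yyDeltaDoubling_mult_of_ne H h,
      Finset.filter_eq_empty_iff.mpr fun s hs h' => hS s hs h'.1]
    rfl

lemma iso_yyDelta_yyDeltaDoubling {S : Finset V} {a u v w : V} (ha : a ∉ S) (hu : u ∉ S)
    (hv : v ∉ S) (hw : w ∉ S) (hN : ∀ y, H.Adj a y ↔ y ∈ ({u, v, w} : Set V)) :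
    Iso ((yyDeltaDoubling H S).yyDelta ⟨a, ha⟩ ⟨u, hu⟩ ⟨v, hv⟩ ⟨w, hw⟩)
      (yyDeltaDoubling H (insert a S)) := by
  have hmem (x : V) :
      (∃ hx : x ∉ S, (⟨x, hx⟩ : {v // v ∉ S}) ≠ ⟨a, ha⟩) ↔ x ∉ insert a S := by
    simp [Subtype.ext_iff, and_comm]
  let e : ((yyDeltaDoubling H S).yyDelta ⟨a, ha⟩ ⟨u, hu⟩ ⟨v, hv⟩ ⟨w, hw⟩).V ≃
      (yyDeltaDoubling H (insert a S)).V :=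
    (Equiv.subtypeSubtypeEquivSubtypeExists _ _).trans (Equiv.subtypeEquivRight hmem)
  refine ⟨e, fun p q => ?_⟩
  rcases eq_or_ne p q with rfl | hpq
  · rw [MG.loopless, MG.loopless]
  have hpq' : p.1.1 ≠ q.1.1 := fun h => hpq (Subtype.ext (Subtype.ext h))
  have htri : triCount (⟨u, hu⟩ : {v // v ∉ S}) ⟨v, hv⟩ ⟨w, hw⟩ p.1 q.1 =
      if H.Adj a p.1.1 ∧ H.Adj a q.1.1 then 1 else 0 := by
    refine (triCount_map Subtype.val_injective _ _ _ _ _).symm.trans ?_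
    simp [triCount_eq_ite hpq', hN]
  have hcard : #{s ∈ insert a S | H.Adj s p.1.1 ∧ H.Adj s q.1.1} =
      #{s ∈ S | H.Adj s p.1.1 ∧ H.Adj s q.1.1} +
        if H.Adj a p.1.1 ∧ H.Adj a q.1.1 then 1 else 0 := by
    rw [Finset.filter_insert]
    split_ifs <;> simp [Finset.card_insert_of_notMem, ha]
  rw [yyDelta_mult_of_ne hpq, yyDeltaDoubling_mult_of_ne H (e.injective.ne hpq),
    yyDeltaDoubling_mult_of_ne H fun h => hpq' (congrArg Subtype.val h), htri]
  exact (congrArg (_ + ·) hcard).trans (add_assoc _ _ _).symm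

lemma yyDeltaStep_yyDeltaDoubling_insert [DecidableRel H.Adj] {S : Finset V} {a : V}
    (ha : a ∉ S) (hS : ∀ s ∈ S, ¬ H.Adj s a) (hdeg : H.degree a = 3) :
    YYDeltaStep (yyDeltaDoubling H S) (yyDeltaDoubling H (insert a S)) := by
  obtain ⟨u, v, w, huv, huw, hvw, hN⟩ := Finset.card_eq_three.mp hdeg
  have hadj (y : V) : H.Adj a y ↔ y ∈ ({u, v, w} : Set V) := by
    rw [← H.mem_neighborFinset, hN]
    simp
  have hout (y : V) (hy : y ∈ ({u, v, w} : Set V)) : y ∉ S :=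
    fun hyS => hS y hyS ((hadj y).2 hy).symm
  have hu := hout u (by simp)
  have hv := hout v (by simp)
  have hw := hout w (by simp)
  refine ⟨⟨a, ha⟩, ⟨u, hu⟩, ⟨v, hv⟩, ⟨w, hw⟩, isWye_of_mult ?_ ?_ ?_ fun y => ?_,
    iso_yyDelta_yyDeltaDoubling H ha hu hv hw hadj⟩
  · simpa [Subtype.ext_iff] using huv
  · simpa [Subtype.ext_iff] using huw
  · simpa [Subtype.ext_iff] using hvw
  · rw [yyDeltaDoubling_mult_of_forall_not_adj H ha hS, hadj]
    simp [Subtype.ext_iff]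

lemma dyyEquiv_doubling_yyDeltaDoubling [DecidableRel H.Adj] {S : Finset V}
    (hS : H.IsIndepSet S) (hdeg : ∀ s ∈ S, H.degree s = 3) :
    DYYEquiv (doubling H) (yyDeltaDoubling H S) := by
  induction S using Finset.induction_on with
  | empty => exact .of_iso (iso_doubling_yyDeltaDoubling_empty H)
  | insert a S ha ih =>
    rw [Finset.coe_insert, SimpleGraph.IsIndepSet, Set.pairwise_insert] at hS
    refine Relation.EqvGen.trans _ _ _
      (ih hS.1 fun s hs => hdeg s (Finset.mem_insert_of_mem hs)) (DYYEquiv.of_yyDeltaStep ?_)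
    refine yyDeltaStep_yyDeltaDoubling_insert H ha (fun s hs => ?_) (hdeg a (by simp))
    exact (hS.2 s hs fun h => ha (h ▸ hs)).2

end yyDeltaDoubling

lemma exists_isIndepSet_two_mul_card_ge {V : Type} [Fintype V] {H : SimpleGraph V} {A : Set V}
    (hA : ∀ u v, H.Adj u v → (u ∈ A ∧ v ∉ A) ∨ (u ∉ A ∧ v ∈ A)) :
    ∃ S : Finset V, H.IsIndepSet S ∧ Fintype.card V ≤ 2 * #S := by
  have hind (P : V → Prop) [DecidablePred P] (hP : ∀ u v, H.Adj u v → ¬(P u ∧ P v)) :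
      H.IsIndepSet (({x | P x} : Finset V) : Set V) :=
    fun x hx y hy _ hxy => hP x y hxy ⟨by simpa using hx, by simpa using hy⟩
  have hin : H.IsIndepSet (({x | x ∈ A} : Finset V) : Set V) :=
    hind (· ∈ A) fun u v huv => by have := hA u v huv; tauto
  have hout : H.IsIndepSet (({x | x ∉ A} : Finset V) : Set V) :=
    hind (· ∉ A) fun u v huv => by have := hA u v huv; tauto
  have hcard := Finset.card_filter_add_card_filter_not (s := Finset.univ) (· ∈ A)
  rw [Finset.card_univ] at hcard
  rcases le_total #{x | x ∈ A} #{x | x ∉ A} with h | h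
  · exact ⟨_, hout, by omega⟩
  · exact ⟨_, hin, by omega⟩

end MG

/-- If `H` is a simple 3-regular bipartite graph on `n` vertices
and `G` is its doubling, then the Δ-YY equivalence class of `G` contains a
multigraph with at most `n / 2` vertices; in particular every multigraph with
the minimum number of vertices in the class has at most `n / 2` vertices. -/
theorem stmt_12 {V : Type} [Fintype V] (H : SimpleGraph V) [DecidableRel H.Adj]
    (h3 : H.IsRegularOfDegree 3)
    (hbip : ∃ A : Set V, ∀ u v : V, H.Adj u v →
      ((u ∈ A ∧ v ∉ A) ∨ (u ∉ A ∧ v ∈ A))) :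
    (∃ K : MG, MG.DYYEquiv (MG.doubling H) K ∧ 2 * K.order ≤ Fintype.card V) ∧
    (∀ K : MG, MG.DYYEquiv (MG.doubling H) K →
      (∀ L : MG, MG.DYYEquiv (MG.doubling H) L → K.order ≤ L.order) →
      2 * K.order ≤ Fintype.card V) := by
  obtain ⟨A, hA⟩ := hbip
  obtain ⟨S, hSind, hScard⟩ := MG.exists_isIndepSet_two_mul_card_ge hA
  have hequiv := MG.dyyEquiv_doubling_yyDeltaDoubling H hSind fun s _ => h3 s
  have hsmall : 2 * (MG.yyDeltaDoubling H S).order ≤ Fintype.card V := by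
    rw [MG.order_yyDeltaDoubling]
    omega
  exact ⟨⟨_, hequiv, hsmall⟩,
    fun K _ hmin => (Nat.mul_le_mul_left 2 (hmin _ hequiv)).trans hsmall⟩
end
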